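/- arXiv:1602.04758 — 5 statements merged into one kernel-verified Lean document; each statement's English description precedes it below -/
import Mathlib

section
/- Let B' ∈ 𝐒₁ be defined as follows: for every A ∈ 𝐒 and every f ≥ 0, the supremum defining H(A,f) = sup_{B ∈ 𝐒₁} (−B:A + f·(det B)^{1/d}) is attained, and moreover there exists a maximizer B' ∈ 𝐒₁ of this supremum which commutes with A, i.e. A·B' = B'·A. -/
open Matrix Set

/-- The set 𝐒₁ of positive semidefinite symmetric d×d real matrices with unit trace. -/
def S1set (d : ℕ) : Set (Matrix (Fin d) (Fin d) ℝ) :=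
  {B | B.PosSemidef ∧ B.trace = 1}

/-- The value −B:A + f·(det B)^(1/d) appearing under the supremum of the Bellman operator. -/
noncomputable def bval (d : ℕ) (A B : Matrix (Fin d) (Fin d) ℝ) (f : ℝ) : ℝ :=
  -((B * A).trace) + f * B.det ^ ((1 : ℝ) / d)

/-- The Bellman operator H(A,f) = sup_{B ∈ 𝐒₁} (−B:A + f·(det B)^(1/d)). -/
noncomputable def bellman (d : ℕ) (A : Matrix (Fin d) (Fin d) ℝ) (f : ℝ) : ℝ :=
  sSup ((fun B => bval d A B f) '' S1set d)

/-- The Monge–Ampère operator M(A,f) = (f/d)^d − det A. -/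
noncomputable def MAop (d : ℕ) (A : Matrix (Fin d) (Fin d) ℝ) (f : ℝ) : ℝ :=
  (f / d) ^ d - A.det

/-- The Hessian matrix D²φ(x) of φ : ℝ^d → ℝ at x. -/
noncomputable def hessianM (d : ℕ) (φ : (Fin d → ℝ) → ℝ) (x : Fin d → ℝ) :
    Matrix (Fin d) (Fin d) ℝ :=
  fun i j => iteratedFDeriv ℝ 2 φ x ![Pi.single i 1, Pi.single j 1]

section helpers
variable {d : ℕ}

lemma psd_symm_apply {B : Matrix (Fin d) (Fin d) ℝ} (hB : B.PosSemidef) (i j : Fin d) :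
    B j i = B i j := by
  have := congrFun (congrFun hB.1 i) j
  simpa [conjTranspose_apply] using this

lemma psd_diag_nonneg {B : Matrix (Fin d) (Fin d) ℝ} (hB : B.PosSemidef) (i : Fin d) :
    0 ≤ B i i := by
  have := hB.dotProduct_mulVec_nonneg (Pi.single i 1)
  simpa [dotProduct_single, single_dotProduct, mulVec_single] using this

lemma psd_sq_le {B : Matrix (Fin d) (Fin d) ℝ} (hB : B.PosSemidef) (i j : Fin d) :
    (B i j) ^ 2 ≤ B i i * B j j := by
  have key : ∀ t : ℝ, 0 ≤ B i i * (t * t) + (2 * B i j) * t + B j j := by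
    intro t
    have h := hB.dotProduct_mulVec_nonneg (t • (Pi.single i 1 : Fin d → ℝ) + (Pi.single j 1 : Fin d → ℝ))
    simp only [star_trivial, mulVec_add, mulVec_smul, mulVec_single, mul_one,
      dotProduct_add, add_dotProduct, smul_dotProduct, dotProduct_smul,
      single_dotProduct, dotProduct_single, one_mul, smul_eq_mul] at h
    have hji : B j i = B i j := psd_symm_apply hB i j
    have heq : B i i * (t * t) + (2 * B i j) * t + B j j
        = t * (t * B i i + B j i) + (t * B i j + B j j) := by rw [hji]; ring
    rw [heq]; simpa [Matrix.col, op_smul_eq_mul] using h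
  have hd := discrim_le_zero key
  simp only [discrim] at hd
  nlinarith [hd]
end helpers

lemma S1_isClosed (d : ℕ) : IsClosed (S1set d) := by
  have h1 : IsClosed {B : Matrix (Fin d) (Fin d) ℝ | B.IsHermitian} :=
    isClosed_eq (continuous_id.matrix_conjTranspose) continuous_id
  have h2 : IsClosed {B : Matrix (Fin d) (Fin d) ℝ |
      ∀ x : Fin d → ℝ, 0 ≤ star x ⬝ᵥ B *ᵥ x} := by
    have : {B : Matrix (Fin d) (Fin d) ℝ | ∀ x : Fin d → ℝ, 0 ≤ star x ⬝ᵥ B *ᵥ x}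
        = ⋂ x : Fin d → ℝ, {B | 0 ≤ star x ⬝ᵥ B *ᵥ x} := by
      ext B; simp
    rw [this]
    exact isClosed_iInter fun x => isClosed_le continuous_const
      (Continuous.dotProduct continuous_const
        (continuous_id.matrix_mulVec continuous_const))
  have h3 : IsClosed {B : Matrix (Fin d) (Fin d) ℝ | B.trace = 1} :=
    isClosed_eq (continuous_id.matrix_trace) continuous_const
  have : S1set d = ({B | B.IsHermitian} ∩ {B | ∀ x : Fin d → ℝ, 0 ≤ star x ⬝ᵥ B *ᵥ x})
      ∩ {B | B.trace = 1} := by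
    ext B; simp [S1set, Matrix.posSemidef_iff_dotProduct_mulVec, and_assoc]
  rw [this]
  exact ((h1.inter h2).inter h3)

lemma S1_compact (d : ℕ) : IsCompact (S1set d) := by
  have hK : IsCompact (Set.pi Set.univ fun _ : Fin d =>
      (Set.pi Set.univ fun _ : Fin d => Set.Icc (-1:ℝ) 1)) :=
    isCompact_univ_pi fun _ => isCompact_univ_pi fun _ => isCompact_Icc
  refine IsCompact.of_isClosed_subset hK (S1_isClosed d) ?_
  intro B hB
  obtain ⟨hpsd, htr⟩ := hB
  have hdiag1 : ∀ i, B i i ≤ 1 := by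
    intro i
    have := Finset.single_le_sum (f := fun k => B k k)
      (fun k _ => psd_diag_nonneg hpsd k) (Finset.mem_univ i)
    simpa [Matrix.trace, Matrix.diag, htr] using htr ▸ this
  intro i _
  intro j _
  have h1 : (B i j) ^ 2 ≤ 1 := by
    have := psd_sq_le hpsd i j
    have h2 := psd_diag_nonneg hpsd i
    have h3 := psd_diag_nonneg hpsd j
    nlinarith [hdiag1 i, hdiag1 j]
  constructor <;> nlinarith [h1]

lemma bval_continuous (d : ℕ) (A : Matrix (Fin d) (Fin d) ℝ) (f : ℝ) :
    Continuous fun B => bval d A B f := by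
  unfold bval
  refine Continuous.add ?_ ?_
  · exact ((continuous_id.matrix_mul continuous_const).matrix_trace).neg
  · exact continuous_const.mul
      ((Real.continuous_rpow_const (by positivity)).comp continuous_id.matrix_det)

lemma S1_nonempty (d : ℕ) (hd : 2 ≤ d) : (S1set d).Nonempty := by
  refine ⟨Matrix.diagonal (fun _ => (d:ℝ)⁻¹), ?_, ?_⟩
  · exact Matrix.PosSemidef.diagonal (fun i => by positivity)
  · have hd0 : (d:ℝ) ≠ 0 := by positivity
    simp [Matrix.trace, Matrix.diag, Finset.sum_const, hd0]

lemma trace_eq_sum_eigs {d : ℕ} {M : Matrix (Fin d) (Fin d) ℝ} (hM : M.IsHermitian) :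
    M.trace = ∑ i, hM.eigenvalues i := by
  conv_lhs => rw [hM.spectral_theorem]
  rw [Unitary.conjStarAlgAut_apply]
  rw [Matrix.trace_mul_comm, ← mul_assoc,
    (Matrix.mem_unitaryGroup_iff').mp (Matrix.IsHermitian.eigenvectorUnitary hM).2, one_mul]
  simp [Matrix.trace_diagonal]

lemma det_le_one_of_unit_diag {d : ℕ} (hd : 0 < d) {M : Matrix (Fin d) (Fin d) ℝ}
    (hM : M.PosSemidef) (hdiag : ∀ i, M i i = 1) : M.det ≤ 1 := by
  have hd0 : (d : ℝ) ≠ 0 := Nat.cast_ne_zero.mpr hd.ne'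
  have hμ : ∀ i, 0 ≤ hM.1.eigenvalues i := fun i => hM.eigenvalues_nonneg i
  have htr : ∑ i, hM.1.eigenvalues i = (d : ℝ) := by
    rw [← trace_eq_sum_eigs hM.1]
    simp [Matrix.trace, Matrix.diag, hdiag]
  have hdet : M.det = ∏ i, hM.1.eigenvalues i := by
    have := hM.1.det_eq_prod_eigenvalues
    simpa using this
  have hgm := Real.geom_mean_le_arith_mean_weighted Finset.univ
    (fun _ => 1 / (d : ℝ)) hM.1.eigenvalues
    (fun i _ => by positivity)
    (by simp [Finset.sum_const]; field_simp)
    (fun i _ => hμ i)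
  have hsum : ∑ i, (1 / (d : ℝ)) * hM.1.eigenvalues i = 1 := by
    rw [← Finset.mul_sum, htr]; field_simp
  rw [hsum] at hgm
  have hprod : (∏ i, hM.1.eigenvalues i ^ ((1 : ℝ) / d)) ^ d = ∏ i, hM.1.eigenvalues i := by
    rw [← Finset.prod_pow]
    refine Finset.prod_congr rfl fun i _ => ?_
    rw [← Real.rpow_natCast (hM.1.eigenvalues i ^ ((1:ℝ)/d)) d, ← Real.rpow_mul (hμ i)]
    rw [one_div, inv_mul_cancel₀ hd0, Real.rpow_one]
  have hbase : 0 ≤ ∏ i, hM.1.eigenvalues i ^ ((1 : ℝ) / d) :=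
    Finset.prod_nonneg fun i _ => Real.rpow_nonneg (hμ i) _
  calc M.det = (∏ i, hM.1.eigenvalues i ^ ((1 : ℝ) / d)) ^ d := by rw [hprod, hdet]
    _ ≤ 1 ^ d := pow_le_pow_left₀ hbase hgm d
    _ = 1 := one_pow d

lemma psd_det_le_prod_diag {d : ℕ} (hd : 0 < d) {C : Matrix (Fin d) (Fin d) ℝ}
    (hC : C.PosSemidef) : C.det ≤ ∏ i, C i i := by
  by_cases hall : ∀ i, 0 < C i i
  · set D : Matrix (Fin d) (Fin d) ℝ := diagonal (fun i => (Real.sqrt (C i i))⁻¹) with hD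
    have hDsym : Dᴴ = D := by
      rw [conjTranspose_eq_transpose_of_trivial, hD, diagonal_transpose]
    have hR : (D * C * D).PosSemidef := by
      have := hC.conjTranspose_mul_mul_same D
      rwa [hDsym] at this
    have hRdiag : ∀ i, (D * C * D) i i = 1 := by
      intro i
      have hs : 0 < Real.sqrt (C i i) := Real.sqrt_pos.mpr (hall i)
      rw [Matrix.mul_diagonal, Matrix.diagonal_mul]
      field_simp
      rw [Real.sq_sqrt (hall i).le]
    have h1 := det_le_one_of_unit_diag hd hR hRdiag
    have hdetD : D.det = ∏ i, (Real.sqrt (C i i))⁻¹ := det_diagonal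
    rw [det_mul, det_mul, hdetD] at h1
    have hp : (0:ℝ) < ∏ i, Real.sqrt (C i i) :=
      Finset.prod_pos fun i _ => Real.sqrt_pos.mpr (hall i)
    have hps : (∏ i, Real.sqrt (C i i)) * (∏ i, Real.sqrt (C i i)) = ∏ i, C i i := by
      rw [← Finset.prod_mul_distrib]
      exact Finset.prod_congr rfl fun i _ => Real.mul_self_sqrt (hall i).le
    rw [Finset.prod_inv_distrib] at h1
    calc C.det = ((∏ i, Real.sqrt (C i i))⁻¹ * C.det * (∏ i, Real.sqrt (C i i))⁻¹)
        * ((∏ i, Real.sqrt (C i i)) * (∏ i, Real.sqrt (C i i))) := by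
          field_simp
      _ ≤ 1 * ((∏ i, Real.sqrt (C i i)) * (∏ i, Real.sqrt (C i i))) := by
          apply mul_le_mul_of_nonneg_right h1 (by positivity)
      _ = ∏ i, C i i := by rw [one_mul, hps]
  · push_neg at hall
    obtain ⟨i, hi⟩ := hall
    have hzero : C i i = 0 := le_antisymm hi (psd_diag_nonneg hC i)
    have hrow : ∀ j, C i j = 0 := by
      intro j
      have := psd_sq_le hC i j
      rw [hzero, zero_mul] at this
      nlinarith [this]
    rw [Matrix.det_eq_zero_of_row_eq_zero i hrow]
    exact Finset.prod_nonneg fun j _ => psd_diag_nonneg hC j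

lemma psd_det_nonneg {d : ℕ} {B : Matrix (Fin d) (Fin d) ℝ} (hB : B.PosSemidef) :
    0 ≤ B.det := by
  have hdet : B.det = ∏ i, hB.1.eigenvalues i := by simpa using hB.1.det_eq_prod_eigenvalues
  rw [hdet]
  exact Finset.prod_nonneg fun i _ => hB.eigenvalues_nonneg i



/-- For every symmetric A and f ≥ 0, the supremum defining H(A,f) is attained, and there
is a maximizer B' ∈ 𝐒₁ which commutes with A. -/
theorem stmt_0 (d : ℕ) (hd : 2 ≤ d) (A : Matrix (Fin d) (Fin d) ℝ) (hA : A.IsSymm)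
    (f : ℝ) (hf : 0 ≤ f) :
    ∃ B' ∈ S1set d, bval d A B' f = bellman d A f ∧ A * B' = B' * A := by
  have hd0 : 0 < d := by omega
  obtain ⟨B₀, hB₀mem, hB₀max⟩ := (S1_compact d).exists_isMaxOn (S1_nonempty d hd)
    ((bval_continuous d A f).continuousOn)
  have hAh : A.IsHermitian := by
    rw [Matrix.IsHermitian, conjTranspose_eq_transpose_of_trivial]; exact hA
  set U : Matrix (Fin d) (Fin d) ℝ := ↑(hAh.eigenvectorUnitary) with hUdef
  have hU1 : star U * U = 1 := Matrix.mem_unitaryGroup_iff'.mp hAh.eigenvectorUnitary.2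
  have hU2 : U * star U = 1 := Matrix.mem_unitaryGroup_iff.mp hAh.eigenvectorUnitary.2
  set μ : Fin d → ℝ := hAh.eigenvalues with hμdef
  have hspec : A = U * diagonal μ * star U := by
    have h := hAh.spectral_theorem
    have hcomp : (RCLike.ofReal ∘ μ : Fin d → ℝ) = μ := by ext i; simp
    rw [hcomp] at h
    exact h
  set C : Matrix (Fin d) (Fin d) ℝ := star U * B₀ * U with hCdef
  have hCpsd : C.PosSemidef := by
    have h := hB₀mem.1.conjTranspose_mul_mul_same U
    rwa [← Matrix.star_eq_conjTranspose] at h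
  set X : Matrix (Fin d) (Fin d) ℝ := diagonal (fun i => C i i) with hXdef
  have hXpsd : X.PosSemidef := Matrix.PosSemidef.diagonal fun i => psd_diag_nonneg hCpsd i
  set B' : Matrix (Fin d) (Fin d) ℝ := U * X * star U with hB'def
  -- B₀ recovered from C
  have hB₀eq : U * C * star U = B₀ := by
    calc U * (star U * B₀ * U) * star U = (U * star U) * B₀ * (U * star U) := by
          noncomm_ring
      _ = B₀ := by rw [hU2, one_mul, mul_one]
  -- key sandwich multiplication
  have sandwich : ∀ Y Z : Matrix (Fin d) (Fin d) ℝ,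
      (U * Y * star U) * (U * Z * star U) = U * (Y * Z) * star U := by
    intro Y Z
    calc (U * Y * star U) * (U * Z * star U) = U * Y * (star U * U) * Z * star U := by
          noncomm_ring
      _ = U * (Y * Z) * star U := by rw [hU1, mul_one, mul_assoc U Y Z, mul_assoc]
  -- trace of sandwiched matrix
  have trace_sand : ∀ Y : Matrix (Fin d) (Fin d) ℝ,
      (U * Y * star U).trace = Y.trace := by
    intro Y
    rw [Matrix.trace_mul_comm, ← mul_assoc, hU1, one_mul]
  -- membership of B'
  have hB'psd : B'.PosSemidef := by
    have h := hXpsd.mul_mul_conjTranspose_same U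
    rwa [← Matrix.star_eq_conjTranspose] at h
  have htraceC : C.trace = 1 := by
    rw [hCdef, Matrix.trace_mul_comm, ← mul_assoc, hU2, one_mul, hB₀mem.2]
  have hB'tr : B'.trace = 1 := by
    rw [hB'def, trace_sand]
    rw [show X.trace = C.trace by simp [hXdef, Matrix.trace, Matrix.diag], htraceC]
  have hB'mem : B' ∈ S1set d := ⟨hB'psd, hB'tr⟩
  -- commutation
  have hcomm : A * B' = B' * A := by
    have hdc : diagonal μ * X = X * diagonal μ := by
      rw [hXdef, diagonal_mul_diagonal, diagonal_mul_diagonal]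
      exact congrArg Matrix.diagonal (funext fun i => mul_comm _ _)
    rw [hspec, hB'def, sandwich, sandwich, hdc]
  -- traces agree
  have htr_eq : (B' * A).trace = (B₀ * A).trace := by
    conv_rhs => rw [← hB₀eq]
    rw [hspec, hB'def, sandwich, sandwich, trace_sand, trace_sand]
    have h1 : ∀ i, (X * diagonal μ) i i = C i i * μ i := by
      intro i; rw [Matrix.mul_diagonal]; simp [hXdef]
    have h2 : ∀ i, (C * diagonal μ) i i = C i i * μ i := by
      intro i; rw [Matrix.mul_diagonal]
    simp only [Matrix.trace, Matrix.diag]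
    exact Finset.sum_congr rfl fun i _ => by rw [h1 i, h2 i]
  -- determinants
  have hdetU : U.det * (star U).det = 1 := by rw [← det_mul, hU2, det_one]
  have hdetB₀ : B₀.det = C.det := by
    conv_lhs => rw [← hB₀eq]
    rw [det_mul, det_mul, mul_comm U.det C.det, mul_assoc, hdetU, mul_one]
  have hdetB' : B'.det = ∏ i, C i i := by
    rw [hB'def, det_mul, det_mul, mul_comm U.det X.det, mul_assoc, hdetU, mul_one,
      hXdef, det_diagonal]
  -- B' is at least as good as B₀
  have hge : bval d A B₀ f ≤ bval d A B' f := by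
    unfold bval
    rw [htr_eq]
    have hrpow : B₀.det ^ ((1:ℝ)/d) ≤ B'.det ^ ((1:ℝ)/d) := by
      apply Real.rpow_le_rpow (psd_det_nonneg hB₀mem.1)
      · rw [hdetB₀, hdetB']
        exact psd_det_le_prod_diag hd0 hCpsd
      · positivity
    have := mul_le_mul_of_nonneg_left hrpow hf
    linarith
  have hle : bval d A B' f ≤ bval d A B₀ f := hB₀max hB'mem
  have heq : bval d A B' f = bval d A B₀ f := le_antisymm hle hge
  refine ⟨B', hB'mem, ?_, hcomm⟩
  have hgreat : IsGreatest ((fun B => bval d A B f) '' S1set d) (bval d A B' f) := by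
    constructor
    · exact ⟨B', hB'mem, rfl⟩
    · rintro y ⟨B, hB, rfl⟩
      rw [heq]
      exact hB₀max hB
  exact (hgreat.csSup_eq).symm
end

section
/- Let Ω ⊆ ℝ^d be a bounded open set and f : Ω → [0,∞) continuous. Suppose u : Ω → ℝ is upper semicontinuous, convex on Ω, and is a viscosity subsolution of the Monge–Ampère equation on the set of convex functions, i.e. for every convex φ ∈ C²(Ω) such that u − φ attains a local maximum at a point x ∈ Ω one has M(D²φ(x), f(x)) ≤ 0. Then u is a viscosity subsolution of the Bellman equation: for every φ ∈ C²(Ω) (not necessarily convex) such that u − φ attains a local maximum at x ∈ Ω, one has H(D²φ(x), f(x)) ≤ 0. -/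
open Matrix Set

variable {d : ℕ}

/-- Decomposition of a CLM on `Fin d → ℝ` via standard basis. -/
lemma clm_decomp {F : Type*} [NormedAddCommGroup F] [NormedSpace ℝ F]
    (L : (Fin d → ℝ) →L[ℝ] F) (v : Fin d → ℝ) :
    L v = ∑ i, v i • L (Pi.single i 1) := by
  have hv : v = ∑ i, v i • (Pi.single i (1:ℝ) : Fin d → ℝ) := by
    ext j
    simp [Pi.single_apply]
  conv_lhs => rw [hv]
  rw [map_sum]
  simp

noncomputable def bilinCLM (N : Matrix (Fin d) (Fin d) ℝ) :
    (Fin d → ℝ) →L[ℝ] (Fin d → ℝ) →L[ℝ] ℝ :=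
  LinearMap.toContinuousLinearMap
    { toFun := fun v => LinearMap.toContinuousLinearMap
        { toFun := fun w => v ⬝ᵥ (N *ᵥ w)
          map_add' := fun w₁ w₂ => by simp [Matrix.mulVec_add, dotProduct_add]
          map_smul' := fun c w => by simp [Matrix.mulVec_smul, dotProduct_smul] }
      map_add' := fun v₁ v₂ => by
        ext w; simp [add_dotProduct]
      map_smul' := fun c v => by
        ext w; simp [smul_dotProduct] }

@[simp] lemma bilinCLM_apply (N : Matrix (Fin d) (Fin d) ℝ) (v w : Fin d → ℝ) :
    bilinCLM N v w = v ⬝ᵥ (N *ᵥ w) := rfl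

lemma bilin_expand (L : (Fin d → ℝ) →L[ℝ] (Fin d → ℝ) →L[ℝ] ℝ) (v w : Fin d → ℝ) :
    L v w = ∑ i, ∑ j, v i * w j * L (Pi.single i 1) (Pi.single j 1) := by
  rw [clm_decomp L v]
  rw [ContinuousLinearMap.sum_apply]
  refine Finset.sum_congr rfl fun i _ => ?_
  rw [ContinuousLinearMap.smul_apply, clm_decomp (L (Pi.single i 1)) w]
  rw [Finset.smul_sum]
  refine Finset.sum_congr rfl fun j _ => ?_
  simp [smul_eq_mul]; ring

lemma hessian_quad (N : Matrix (Fin d) (Fin d) ℝ) (c : ℝ) (P : (Fin d → ℝ) →L[ℝ] ℝ)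
    (x : Fin d → ℝ) :
    hessianM d (fun y => c + P (y - x) + bilinCLM N (y - x) (y - x)) x
      = fun i j => N i j + N j i := by
  set B := bilinCLM N with hB
  set ψ : (Fin d → ℝ) → ℝ := fun y => c + P (y - x) + B (y - x) (y - x) with hψ
  set C₂ : (Fin d → ℝ) →L[ℝ] (Fin d → ℝ) →L[ℝ] ℝ := B.flip + B with hC₂
  set F' : (Fin d → ℝ) → ((Fin d → ℝ) →L[ℝ] ℝ) := fun z => P + C₂ (z - x) with hF'
  have h0 : ∀ z : Fin d → ℝ, HasFDerivAt (fun y : Fin d → ℝ => y - x)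
      (ContinuousLinearMap.id ℝ (Fin d → ℝ)) z := fun z => (hasFDerivAt_id z).sub_const x
  have hder : ∀ z, HasFDerivAt ψ (F' z) z := by
    intro z
    have hc : HasFDerivAt (fun y : Fin d → ℝ => B (y - x)) B z := by
      exact (B.hasFDerivAt (x := z - x)).comp z (h0 z)
    have hquad := hc.clm_apply (h0 z)
    have hP : HasFDerivAt (fun y : Fin d → ℝ => P (y - x)) P z := by
      exact (P.hasFDerivAt (x := z - x)).comp z (h0 z)
    have := ((hasFDerivAt_const c z).add hP).add hquad
    refine this.congr_fderiv ?_
    refine ContinuousLinearMap.ext fun h => ?_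
    simp [F', C₂]
    ring
  have hfd : fderiv ℝ ψ = F' := funext fun z => (hder z).fderiv
  have hder2 : HasFDerivAt F' C₂ x := by
    have : HasFDerivAt (fun z : Fin d → ℝ => C₂ (z - x)) C₂ x := by
      simpa using (C₂.hasFDerivAt.sub_const (C₂ x) :
        HasFDerivAt (fun z : Fin d → ℝ => C₂ z - C₂ x) C₂ x)
    simpa [F'] using this.const_add P
  have hsnd : fderiv ℝ (fderiv ℝ ψ) x = C₂ := by rw [hfd]; exact hder2.fderiv
  funext i j
  show iteratedFDeriv ℝ 2 ψ x ![Pi.single i 1, Pi.single j 1] = N i j + N j i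
  rw [iteratedFDeriv_two_apply]
  simp only [Matrix.cons_val_zero, Matrix.cons_val_one, Matrix.head_cons]
  rw [hsnd]
  simp [C₂, B, dotProduct_single, single_dotProduct, Matrix.mulVec_single]
  ring

lemma taylor_quad {Ω : Set (Fin d → ℝ)} (hΩo : IsOpen Ω) {φ : (Fin d → ℝ) → ℝ}
    (hφ : ContDiffOn ℝ 2 φ Ω) {x : Fin d → ℝ} (hx : x ∈ Ω) {ε : ℝ} (hε : 0 < ε) :
    ∀ᶠ y in nhds x, |φ y - φ x - fderiv ℝ φ x (y - x)
      - (1/2) * fderiv ℝ (fderiv ℝ φ) x (y - x) (y - x)| ≤ ε * ‖y - x‖^2 := by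
  set f' := fderiv ℝ φ with hf'def
  set f'' := fderiv ℝ f' x with hf''def
  have hφ1 : ContDiffOn ℝ 1 φ Ω := hφ.of_le (by norm_num)
  have hdiff : ∀ z ∈ Ω, HasFDerivAt φ (f' z) z := fun z hz =>
    (hφ1.differentiableOn (by norm_num) z hz).differentiableAt (hΩo.mem_nhds hz) |>.hasFDerivAt
  have hf'cd : ContDiffOn ℝ 1 f' Ω := hφ.fderiv_of_isOpen hΩo (by norm_num)
  have hdiff' : ∀ z ∈ Ω, HasFDerivAt f' (fderiv ℝ f' z) z := fun z hz =>
    (hf'cd.differentiableOn (by norm_num) z hz).differentiableAt (hΩo.mem_nhds hz) |>.hasFDerivAt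
  have hsymm : ∀ v w, f'' v w = f'' w v := by
    intro v w
    refine second_derivative_symmetric_of_eventually (f := φ) ?_ (hdiff' x hx) v w
    filter_upwards [hΩo.mem_nhds hx] with z hz using hdiff z hz
  have hcont : ContinuousOn (fderiv ℝ f') Ω :=
    hf'cd.continuousOn_fderiv_of_isOpen hΩo (le_refl _)
  have hca : ContinuousAt (fderiv ℝ f') x := hcont.continuousAt (hΩo.mem_nhds hx)
  have hev : ∀ᶠ z in nhds x, ‖fderiv ℝ f' z - f''‖ ≤ ε := by
    have := hca.tendsto (Metric.closedBall_mem_nhds f'' hε)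
    filter_upwards [this] with z hz
    exact le_of_eq_of_le (dist_eq_norm (fderiv ℝ f' z) f'').symm (Metric.mem_closedBall.1 hz)
  obtain ⟨δ, hδpos, hδ⟩ := Metric.eventually_nhds_iff_ball.1 (hev.and (hΩo.eventually_mem hx))
  -- step 1
  have step1 : ∀ y ∈ Metric.ball x δ, ‖f' y - f' x - f'' (y - x)‖ ≤ ε * ‖y - x‖ := by
    intro y hy
    have hmvt := Convex.norm_image_sub_le_of_norm_hasFDerivWithin_le
      (f := fun z => f' z - f'' z) (f' := fun z => fderiv ℝ f' z - f'')
      (fun z hz => (((hdiff' z (hδ z hz).2)).sub (f''.hasFDerivAt)).hasFDerivWithinAt)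
      (fun z hz => (hδ z hz).1) (convex_ball x δ) (Metric.mem_ball_self hδpos) hy
    have : f' y - f'' y - (f' x - f'' x) = f' y - f' x - f'' (y - x) := by
      rw [map_sub]; abel
    rwa [this] at hmvt
  -- step 2
  rw [Metric.eventually_nhds_iff_ball]
  refine ⟨δ, hδpos, fun y hy => ?_⟩
  set w : (Fin d → ℝ) → ℝ := fun z => φ z - f' x z - (1/2) * f'' (z - x) (z - x) with hw
  have hwder : ∀ z ∈ Metric.ball x δ,
      HasFDerivAt w (f' z - f' x - f'' (z - x)) z := by
    intro z hz
    have h0 : HasFDerivAt (fun y : Fin d → ℝ => y - x)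
        (ContinuousLinearMap.id ℝ (Fin d → ℝ)) z := (hasFDerivAt_id z).sub_const x
    have hc : HasFDerivAt (fun y : Fin d → ℝ => f'' (y - x)) f'' z := by
      simpa using (f''.hasFDerivAt.sub_const (f'' x) :
        HasFDerivAt (fun y : Fin d → ℝ => f'' y - f'' x) f'' z)
    have hq := (hc.clm_apply h0).const_mul (1/2 : ℝ)
    have := ((hdiff z (hδ z hz).2).sub ((f' x).hasFDerivAt)).sub hq
    refine this.congr_fderiv ?_
    refine ContinuousLinearMap.ext fun h => ?_
    simp only [ContinuousLinearMap.coe_sub', Pi.sub_apply, ContinuousLinearMap.add_apply,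
      ContinuousLinearMap.coe_smul', Pi.smul_apply, ContinuousLinearMap.comp_apply,
      ContinuousLinearMap.flip_apply, ContinuousLinearMap.coe_id', id_eq, smul_eq_mul]
    rw [hsymm h (z - x)]
    ring
  have hsub : segment ℝ x y ⊆ Metric.ball x δ :=
    (convex_ball x δ).segment_subset (Metric.mem_ball_self hδpos) hy
  have hbound : ∀ z ∈ segment ℝ x y, ‖f' z - f' x - f'' (z - x)‖ ≤ ε * ‖y - x‖ := by
    intro z hz
    obtain ⟨t, ht, rfl⟩ := (segment_eq_image' ℝ x y) ▸ hz
    have h1 : ‖(x + t • (y - x)) - x‖ ≤ ‖y - x‖ := by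
      simp only [add_sub_cancel_left, norm_smul, Real.norm_eq_abs, abs_of_nonneg ht.1]
      nlinarith [norm_nonneg (y - x), ht.2]
    calc ‖f' (x + t • (y - x)) - f' x - f'' ((x + t • (y - x)) - x)‖
        ≤ ε * ‖(x + t • (y - x)) - x‖ := step1 _ (hsub hz)
      _ ≤ ε * ‖y - x‖ := by nlinarith [hε.le]
  have hmvt2 := Convex.norm_image_sub_le_of_norm_hasFDerivWithin_le
    (f := w) (f' := fun z => f' z - f' x - f'' (z - x))
    (fun z hz => (hwder z (hsub hz)).hasFDerivWithinAt) hbound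
    (convex_segment x y) (left_mem_segment ℝ x y) (right_mem_segment ℝ x y)
  have hwx : w y - w x = φ y - φ x - f' x (y - x) - (1/2) * f'' (y - x) (y - x) := by
    simp only [hw]
    rw [map_sub (f' x)]
    simp [sub_self]
    ring
  rw [hwx] at hmvt2
  calc |φ y - φ x - f' x (y - x) - (1/2) * f'' (y - x) (y - x)|
      ≤ ε * ‖y - x‖ * ‖y - x‖ := by simpa [Real.norm_eq_abs] using hmvt2
    _ = ε * ‖y - x‖^2 := by ring

lemma psd_det_nonneg_s2 {M : Matrix (Fin d) (Fin d) ℝ} (h : M.PosSemidef) : 0 ≤ M.det := by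
  have := h.1.det_eq_prod_eigenvalues
  rw [this]
  exact Finset.prod_nonneg fun i _ => by simpa using h.eigenvalues_nonneg i

lemma herm_trace_eq_sum {M : Matrix (Fin d) (Fin d) ℝ} (h : M.IsHermitian) :
    M.trace = ∑ i, h.eigenvalues i := by
  set U : Matrix (Fin d) (Fin d) ℝ := (Matrix.IsHermitian.eigenvectorUnitary h : Matrix (Fin d) (Fin d) ℝ)
  have hU : star U * U = 1 :=
    Matrix.mem_unitaryGroup_iff'.mp (Matrix.IsHermitian.eigenvectorUnitary h).2
  calc M.trace
      = Matrix.trace (U * Matrix.diagonal (RCLike.ofReal ∘ h.eigenvalues) * star U) := by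
        conv_lhs => rw [h.spectral_theorem, Unitary.conjStarAlgAut_apply]
    _ = Matrix.trace (star U * U * Matrix.diagonal (RCLike.ofReal ∘ h.eigenvalues)) := by
        rw [Matrix.trace_mul_cycle]
    _ = ∑ i, h.eigenvalues i := by
        rw [hU, one_mul, Matrix.trace_diagonal]
        simp

open scoped MatrixOrder in
lemma trace_amgm (hd : 0 < d) {A B : Matrix (Fin d) (Fin d) ℝ}
    (hA : A.PosSemidef) (hB : B.PosSemidef) :
    (d : ℝ) * (A.det * B.det) ^ ((1:ℝ)/d) ≤ (B * A).trace := by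
  set S := CFC.sqrt B with hSdef
  have hS : S * S = B := CFC.sqrt_mul_sqrt_self B (Matrix.nonneg_iff_posSemidef.mpr hB)
  have hSh : Sᴴ = S := (Matrix.nonneg_iff_posSemidef.mp (CFC.sqrt_nonneg B)).1
  have hC : (S * A * S).PosSemidef := by
    have := hA.mul_mul_conjTranspose_same S
    rwa [hSh] at this
  set μ := hC.1.eigenvalues with hμ
  have hμ0 : ∀ i, 0 ≤ μ i := fun i => hC.eigenvalues_nonneg i
  have htr : (B * A).trace = ∑ i, μ i := by
    rw [← herm_trace_eq_sum hC.1, ← hS, Matrix.mul_assoc, Matrix.trace_mul_comm]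
  have hdet : A.det * B.det = ∏ i, μ i := by
    have h1 : (S * A * S).det = ∏ i, μ i := by
      have := hC.1.det_eq_prod_eigenvalues
      simpa using this
    rw [← h1, Matrix.det_mul, Matrix.det_mul, ← hS, Matrix.det_mul]
    ring
  have hAM := Real.geom_mean_le_arith_mean_weighted Finset.univ
    (fun _ => (1:ℝ)/d) μ (fun i _ => by positivity)
    (by simp [Finset.card_univ]; field_simp) (fun i _ => hμ0 i)
  have hprod : ∏ i, μ i ^ ((1:ℝ)/d) = (∏ i, μ i) ^ ((1:ℝ)/d) :=
    Real.finset_prod_rpow Finset.univ μ (fun i _ => hμ0 i) _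
  rw [hprod] at hAM
  rw [htr, hdet]
  have hsum : ∑ i, (1:ℝ)/d * μ i = (1/d) * ∑ i, μ i := by rw [Finset.mul_sum]
  rw [hsum] at hAM
  have hd' : (0:ℝ) < d := by exact_mod_cast hd
  calc (d:ℝ) * (∏ i, μ i) ^ ((1:ℝ)/d) ≤ (d:ℝ) * ((1/d) * ∑ i, μ i) := by
        exact mul_le_mul_of_nonneg_left hAM hd'.le
    _ = ∑ i, μ i := by field_simp

lemma norm_sq_le_dot (v : Fin d → ℝ) : ‖v‖^2 ≤ v ⬝ᵥ v := by
  have hC : ‖v‖ ≤ Real.sqrt (∑ i, v i ^ 2) := by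
    rw [pi_norm_le_iff_of_nonneg (Real.sqrt_nonneg _)]
    intro i
    rw [Real.norm_eq_abs, ← Real.sqrt_sq_eq_abs]
    exact Real.sqrt_le_sqrt (Finset.single_le_sum (f := fun j => v j ^ 2)
      (fun j _ => sq_nonneg _) (Finset.mem_univ i))
  have h2 : ‖v‖^2 ≤ (Real.sqrt (∑ i, v i ^ 2))^2 := by
    exact pow_le_pow_left₀ (norm_nonneg v) hC 2
  rw [Real.sq_sqrt (Finset.sum_nonneg fun i _ => sq_nonneg _)] at h2
  calc ‖v‖^2 ≤ ∑ i, v i ^ 2 := h2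
    _ = v ⬝ᵥ v := by simp [dotProduct, sq]

set_option maxHeartbeats 1000000 in
/-- A convex viscosity subsolution of the Monge–Ampère equation on the set of convex
functions is a viscosity subsolution of the Bellman equation. -/
theorem stmt_2 (d : ℕ) (hd : 2 ≤ d) (Ω : Set (Fin d → ℝ)) (hΩo : IsOpen Ω)
    (hΩb : Bornology.IsBounded Ω)
    (f : (Fin d → ℝ) → ℝ) (hfc : ContinuousOn f Ω) (hf0 : ∀ x ∈ Ω, 0 ≤ f x)
    (u : (Fin d → ℝ) → ℝ) (husc : UpperSemicontinuousOn u Ω) (hucvx : ConvexOn ℝ Ω u)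
    (hMAsub : ∀ φ : (Fin d → ℝ) → ℝ, ContDiffOn ℝ 2 φ Ω → ConvexOn ℝ Ω φ →
      ∀ x ∈ Ω, IsLocalMaxOn (fun y => u y - φ y) Ω x →
        MAop d (hessianM d φ x) (f x) ≤ 0) :
    ∀ φ : (Fin d → ℝ) → ℝ, ContDiffOn ℝ 2 φ Ω →
      ∀ x ∈ Ω, IsLocalMaxOn (fun y => u y - φ y) Ω x →
        bellman d (hessianM d φ x) (f x) ≤ 0 := by
  intro φ hφ x hx hmax
  classical
  have hd0 : 0 < d := lt_of_lt_of_le two_pos hd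
  set A := hessianM d φ x with hAdef
  set f' := fderiv ℝ φ with hf'def
  set f'' := fderiv ℝ (fderiv ℝ φ) x with hf''def
  have hmax' : ∀ᶠ y in nhds x, u y - φ y ≤ u x - φ x :=
    hmax.isLocalMax (hΩo.mem_nhds hx)
  have hΩev : ∀ᶠ y in nhds x, y ∈ Ω := hΩo.eventually_mem hx
  -- basic facts about A and f''
  have hAe : ∀ i j, A i j = f'' (Pi.single i 1) (Pi.single j 1) := by
    intro i j
    rw [hAdef]
    show iteratedFDeriv ℝ 2 φ x ![Pi.single i 1, Pi.single j 1] = _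
    rw [iteratedFDeriv_two_apply]
    simp [hf''def]
  have hφ1 : ContDiffOn ℝ 1 φ Ω := hφ.of_le (by norm_num)
  have hdiff : ∀ z ∈ Ω, HasFDerivAt φ (f' z) z := fun z hz =>
    (hφ1.differentiableOn (by norm_num) z hz).differentiableAt (hΩo.mem_nhds hz) |>.hasFDerivAt
  have hf'cd : ContDiffOn ℝ 1 f' Ω := hφ.fderiv_of_isOpen hΩo (by norm_num)
  have hdiff' : HasFDerivAt f' f'' x :=
    ((hf'cd.differentiableOn (by norm_num) x hx).differentiableAt (hΩo.mem_nhds hx)).hasFDerivAt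
  have hsymm : ∀ v w, f'' v w = f'' w v := by
    intro v w
    refine second_derivative_symmetric_of_eventually (f := φ) ?_ hdiff' v w
    filter_upwards [hΩo.mem_nhds hx] with z hz using hdiff z hz
  have hAsym : ∀ i j, A j i = A i j := by
    intro i j
    rw [hAe, hAe]
    exact hsymm _ _
  have hexp : ∀ v w : Fin d → ℝ, f'' v w = ∑ i, ∑ j, v i * w j * A i j := by
    intro v w
    rw [bilin_expand f'' v w]
    exact Finset.sum_congr rfl fun i _ => Finset.sum_congr rfl fun j _ => by rw [hAe]
  have hdot : ∀ v : Fin d → ℝ, v ⬝ᵥ (A *ᵥ v) = f'' v v := by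
    intro v
    have h1 : v ⬝ᵥ (A *ᵥ v) = ∑ i, ∑ j, v i * (A i j * v j) := by
      simp [dotProduct, Matrix.mulVec, Finset.mul_sum]
    rw [hexp v v, h1]
    exact Finset.sum_congr rfl fun i _ => Finset.sum_congr rfl fun j _ => by ring
  -- nonnegativity of the second derivative (convexity of u)
  have hf''nn : ∀ v, 0 ≤ f'' v v := by
    intro v
    have key2 : ∀ ε : ℝ, 0 < ε → -(2*ε) * ‖v‖^2 ≤ f'' v v := by
      intro ε hε
      have htay := taylor_quad hΩo hφ hx hε
      have he1 : Filter.Tendsto (fun t : ℝ => x + t • v) (nhds 0) (nhds x) := by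
        have : Continuous fun t : ℝ => x + t • v :=
          continuous_const.add (continuous_id.smul continuous_const)
        simpa using this.tendsto 0
      have he2 : Filter.Tendsto (fun t : ℝ => x - t • v) (nhds 0) (nhds x) := by
        have : Continuous fun t : ℝ => x - t • v :=
          continuous_const.sub (continuous_id.smul continuous_const)
        simpa using this.tendsto 0
      have hevent : ∀ᶠ t : ℝ in nhds 0,
          (x + t • v ∈ Ω ∧ x - t • v ∈ Ω) ∧
          (u (x + t • v) - φ (x + t • v) ≤ u x - φ x ∧
            u (x - t • v) - φ (x - t • v) ≤ u x - φ x) ∧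
          (|φ (x + t • v) - φ x - f' x ((x + t • v) - x)
              - (1/2) * f'' ((x + t • v) - x) ((x + t • v) - x)| ≤ ε * ‖(x + t • v) - x‖^2 ∧
           |φ (x - t • v) - φ x - f' x ((x - t • v) - x)
              - (1/2) * f'' ((x - t • v) - x) ((x - t • v) - x)| ≤ ε * ‖(x - t • v) - x‖^2) := by
        filter_upwards [he1.eventually hΩev, he2.eventually hΩev, he1.eventually hmax',
          he2.eventually hmax', he1.eventually htay, he2.eventually htay] with
          t h1 h2 h3 h4 h5 h6
        exact ⟨⟨h1, h2⟩, ⟨h3, h4⟩, ⟨h5, h6⟩⟩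
      obtain ⟨t, htmem, htpos⟩ :=
        (((hevent.filter_mono (nhdsWithin_le_nhds (s := Ioi (0:ℝ)))).and
          (eventually_mem_nhdsWithin (a := (0:ℝ)) (s := Ioi 0)))).exists
      obtain ⟨⟨hO1, hO2⟩, ⟨hm1, hm2⟩, ht1, ht2⟩ := htmem
      rw [mem_Ioi] at htpos
      have hyp : (x + t • v) - x = t • v := by abel
      have hym : (x - t • v) - x = -(t • v) := by abel
      rw [hyp] at ht1
      rw [hym] at ht2
      have hmid : (1/2 : ℝ) • (x + t • v) + (1/2 : ℝ) • (x - t • v) = x := by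
        ext i
        simp [Pi.smul_apply, smul_eq_mul]
        ring
      have hconv := hucvx.2 hO1 hO2 (by norm_num : (0:ℝ) ≤ 1/2)
        (by norm_num : (0:ℝ) ≤ 1/2) (by norm_num)
      rw [hmid] at hconv
      have hsum : 2 * φ x ≤ φ (x + t • v) + φ (x - t • v) := by
        simp only [smul_eq_mul] at hconv
        linarith
      have hq1 : f'' (t • v) (t • v) = t^2 * f'' v v := by
        simp only [_root_.map_smul, ContinuousLinearMap.smul_apply, smul_eq_mul]
        ring
      have hq2 : f'' (-(t • v)) (-(t • v)) = t^2 * f'' v v := by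
        simp only [_root_.map_neg, ContinuousLinearMap.neg_apply, neg_neg]
        exact hq1
      have hl : f' x (-(t • v)) = -(f' x (t • v)) := _root_.map_neg _ _
      have hn : ‖t • v‖^2 = t^2 * ‖v‖^2 := by
        rw [norm_smul, Real.norm_eq_abs, mul_pow, sq_abs]
      have hn2 : ‖-(t • v)‖^2 = t^2 * ‖v‖^2 := by rw [norm_neg, hn]
      rw [hq1, hn] at ht1
      rw [hq2, hn2, hl] at ht2
      have ha1 := (abs_le.1 ht1).2
      have ha2 := (abs_le.1 ht2).2
      have ht2pos : 0 < t^2 := by positivity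
      by_contra hcon
      push_neg at hcon
      have hmul := (mul_lt_mul_iff_right₀ ht2pos).2 hcon
      linarith
    rcases eq_or_lt_of_le (sq_nonneg ‖v‖) with h0 | hspos
    · have := key2 1 one_pos
      rw [← h0] at this
      linarith
    · by_contra hneg
      push_neg at hneg
      have hε : 0 < -(f'' v v) / (4 * ‖v‖^2) := div_pos (by linarith) (by linarith)
      have hk := key2 _ hε
      have heq : -(2 * (-(f'' v v) / (4 * ‖v‖^2))) * ‖v‖^2 = f'' v v / 2 := by
        have hv0 : ‖v‖ ≠ 0 := fun h0 => by simp [h0] at hspos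
        field_simp
        ring
      rw [heq] at hk
      linarith
  have hApsd : A.PosSemidef := by
    refine Matrix.PosSemidef.of_dotProduct_mulVec_nonneg ?_ ?_
    · ext i j
      simp only [Matrix.conjTranspose_apply, star_trivial]
      exact hAsym i j
    · intro w
      have hsw : star w = w := by
        ext i
        simp
      rw [hsw, hdot]
      exact hf''nn w
  -- the key determinant inequality
  have hdet : (f x / d)^d ≤ A.det := by
    have key : ∀ t : ℝ, 0 < t → (f x / d)^d ≤ (A + t • (1 : Matrix (Fin d) (Fin d) ℝ)).det := by
      intro t ht
      have hε : 0 < t/2 := by linarith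
      set ε := t/2 with hεdef
      set N : Matrix (Fin d) (Fin d) ℝ := (1/2 : ℝ) • A + ε • 1 with hN
      set ψ : (Fin d → ℝ) → ℝ :=
        fun y => φ x + f' x (y - x) + bilinCLM N (y - x) (y - x) with hψ
      have hNval : ∀ w₁ w₂ : Fin d → ℝ,
          bilinCLM N w₁ w₂ = (1/2) * (w₁ ⬝ᵥ (A *ᵥ w₂)) + ε * (w₁ ⬝ᵥ w₂) := by
        intro w₁ w₂
        rw [bilinCLM_apply, hN]
        rw [Matrix.add_mulVec, dotProduct_add, Matrix.smul_mulVec,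
          Matrix.smul_mulVec, Matrix.one_mulVec, dotProduct_smul,
          dotProduct_smul]
        simp [smul_eq_mul]
      have hdotnn : ∀ w : Fin d → ℝ, 0 ≤ w ⬝ᵥ w := by
        intro w
        have : w ⬝ᵥ w = ∑ i, w i * w i := rfl
        rw [this]
        exact Finset.sum_nonneg fun i _ => mul_self_nonneg _
      have hNq : ∀ w : Fin d → ℝ, 0 ≤ bilinCLM N w w := by
        intro w
        rw [hNval]
        have h2 : 0 ≤ w ⬝ᵥ (A *ᵥ w) := by rw [hdot]; exact hf''nn w
        have h3 := hdotnn w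
        nlinarith [hε.le]
      have hψc : ContDiffOn ℝ 2 ψ Ω := by
        apply ContDiff.contDiffOn
        refine (contDiff_const.add ?_).add ?_
        · exact (f' x).contDiff.comp (contDiff_id.sub contDiff_const)
        · have hb : ContDiff ℝ 2 fun p : (Fin d → ℝ) × (Fin d → ℝ) => bilinCLM N p.1 p.2 :=
            (bilinCLM N).isBoundedBilinearMap.contDiff
          exact hb.comp ((contDiff_id.sub contDiff_const).prodMk (contDiff_id.sub contDiff_const))
      have hψconv : ConvexOn ℝ Ω ψ := by
        refine ⟨hucvx.1, fun y hy z hz a b ha hb hab => ?_⟩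
        simp only [hψ, smul_eq_mul]
        have h1 : (a • y + b • z : Fin d → ℝ) - x = a • (y - x) + b • (z - x) := by
          ext i
          simp only [Pi.add_apply, Pi.sub_apply, Pi.smul_apply, smul_eq_mul]
          linear_combination (x i) * hab
        rw [h1]
        set h := y - x
        set k := z - x
        have e1 : bilinCLM N (a•h + b•k) (a•h + b•k)
            = a^2 * bilinCLM N h h + a*b*bilinCLM N h k + a*b*bilinCLM N k h
              + b^2 * bilinCLM N k k := by
          simp only [map_add, _root_.map_smul, ContinuousLinearMap.add_apply,
            ContinuousLinearMap.smul_apply, smul_eq_mul]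
          ring
        have e2 : f' x (a•h + b•k) = a * f' x h + b * f' x k := by
          simp only [map_add, _root_.map_smul, smul_eq_mul]
        have e3 : 0 ≤ bilinCLM N (h - k) (h - k) := hNq (h - k)
        have e4 : bilinCLM N (h - k) (h - k)
            = bilinCLM N h h - bilinCLM N h k - bilinCLM N k h + bilinCLM N k k := by
          simp only [map_sub, ContinuousLinearMap.sub_apply]
          ring
        rw [e1, e2]
        have ediff : a*(φ x + f' x h + bilinCLM N h h) + b*(φ x + f' x k + bilinCLM N k k)
            - (φ x + (a * f' x h + b * f' x k)
              + (a^2 * bilinCLM N h h + a*b*bilinCLM N h k + a*b*bilinCLM N k h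
                + b^2 * bilinCLM N k k))
            = a*b*(bilinCLM N h h - bilinCLM N h k - bilinCLM N k h + bilinCLM N k k) := by
          have hba : b = 1 - a := by linarith
          rw [hba]
          ring
        have e5 : 0 ≤ a*b*(bilinCLM N h h - bilinCLM N h k - bilinCLM N k h
            + bilinCLM N k k) := by
          rw [← e4]
          exact mul_nonneg (mul_nonneg ha hb) e3
        linarith
      have hψx : ψ x = φ x := by
        simp [hψ]
      have htay := taylor_quad hΩo hφ hx hε
      have hφψ : ∀ᶠ y in nhds x, φ y ≤ ψ y := by
        filter_upwards [htay] with y hy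
        have h5 := (abs_le.1 hy).2
        have h2 : f'' (y - x) (y - x) = (y - x) ⬝ᵥ (A *ᵥ (y - x)) := (hdot _).symm
        have h3 : ‖y - x‖^2 ≤ (y - x) ⬝ᵥ (y - x) := norm_sq_le_dot _
        have h4 := hNval (y - x) (y - x)
        have h6 : ε * ‖y - x‖^2 ≤ ε * ((y - x) ⬝ᵥ (y - x)) :=
          mul_le_mul_of_nonneg_left h3 hε.le
        have h7 : ψ y = φ x + f' x (y - x) + bilinCLM N (y - x) (y - x) := rfl
        rw [h7, h4]
        rw [h2] at h5
        linarith
      have hψmax : IsLocalMaxOn (fun y => u y - ψ y) Ω x := by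
        have hev : ∀ᶠ y in nhds x, u y - ψ y ≤ u x - ψ x := by
          filter_upwards [hφψ, hmax'] with y hy1 hy2
          rw [hψx]
          linarith
        exact hev.filter_mono nhdsWithin_le_nhds
      have hMA := hMAsub ψ hψc hψconv x hx hψmax
      have hhess : hessianM d ψ x = A + t • (1 : Matrix (Fin d) (Fin d) ℝ) := by
        rw [hψ, hessian_quad]
        funext i j
        simp only [hN, Matrix.add_apply, Matrix.smul_apply, Matrix.one_apply, smul_eq_mul]
        rw [hAsym i j]
        by_cases hij : i = j
        · subst hij
          simp [hεdef]
          ring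
        · simp [hij, Ne.symm hij, hεdef]
          ring
      rw [hhess] at hMA
      simp only [MAop] at hMA
      linarith
    have hcont : Continuous (fun s : ℝ => (A + s • (1 : Matrix (Fin d) (Fin d) ℝ)).det) := by
      apply Continuous.matrix_det
      exact continuous_const.add (continuous_id.smul continuous_const)
    have htend : Filter.Tendsto (fun s : ℝ => (A + s • (1 : Matrix (Fin d) (Fin d) ℝ)).det)
        (nhdsWithin 0 (Ioi 0)) (nhds A.det) := by
      have h0 : (A + (0:ℝ) • (1 : Matrix (Fin d) (Fin d) ℝ)).det = A.det := by simp
      simpa [h0] using (hcont.tendsto 0).mono_left nhdsWithin_le_nhds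
    exact ge_of_tendsto htend (eventually_nhdsWithin_of_forall fun s hs => key s (mem_Ioi.1 hs))
  -- final assembly
  have hfx : 0 ≤ f x := hf0 x hx
  have hdA : 0 ≤ A.det := le_trans (by positivity) hdet
  refine Real.sSup_le ?_ le_rfl
  rintro b ⟨B, ⟨hBpsd, hBtr⟩, rfl⟩
  show bval d A B (f x) ≤ 0
  have h1 := trace_amgm hd0 hApsd hBpsd
  have hdB : 0 ≤ B.det := psd_det_nonneg_s2 hBpsd
  have h2 : f x / d ≤ A.det ^ ((1:ℝ)/d) := by
    have hr := Real.rpow_le_rpow (by positivity) hdet (by positivity : (0:ℝ) ≤ 1/d)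
    rwa [one_div, Real.pow_rpow_inv_natCast (by positivity) hd0.ne', ← one_div] at hr
  have hd' : (0:ℝ) < d := by exact_mod_cast hd0
  have h2' : f x ≤ d * A.det ^ ((1:ℝ)/d) := by
    rw [div_le_iff₀ hd'] at h2
    linarith [h2]
  have h3 : f x * B.det ^ ((1:ℝ)/d) ≤ (d:ℝ) * (A.det * B.det) ^ ((1:ℝ)/d) := by
    rw [Real.mul_rpow hdA hdB]
    calc f x * B.det ^ ((1:ℝ)/d)
        ≤ (d * A.det ^ ((1:ℝ)/d)) * B.det ^ ((1:ℝ)/d) :=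
          mul_le_mul_of_nonneg_right h2' (Real.rpow_nonneg hdB _)
      _ = (d:ℝ) * (A.det ^ ((1:ℝ)/d) * B.det ^ ((1:ℝ)/d)) := by ring
  have hfin : f x * B.det ^ ((1:ℝ)/d) ≤ (B * A).trace := le_trans h3 h1
  simp only [bval]
  linarith
end

section
/- Let A ∈ 𝐒₊ with smallest eigenvalue λ, and let g > 0 be a real number. Then H(A, g) > −λ, and every maximizer B' ∈ 𝐒₁ of the supremum defining H(A,g) (i.e. every B' ∈ 𝐒₁ with −B':A + g·(det B')^{1/d} = H(A,g)) is invertible, i.e. det B' > 0. -/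
open Matrix Set

namespace Stmt6Aux

variable {d : ℕ}

lemma psd_diag_nonneg {M : Matrix (Fin d) (Fin d) ℝ} (hM : M.PosSemidef) (i : Fin d) :
    0 ≤ M i i := by
  have := hM.diag_nonneg (i := i)
  simpa [dotProduct, Matrix.mulVec, Pi.single_apply, Finset.mul_sum] using this

lemma trace_mul_diag (M : Matrix (Fin d) (Fin d) ℝ) (v : Fin d → ℝ) :
    (M * diagonal v).trace = ∑ i, M i i * v i := by
  simp [Matrix.trace, Matrix.diag, Matrix.mul_diagonal]

section Spec
variable {A : Matrix (Fin d) (Fin d) ℝ} (hA : A.IsHermitian)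

noncomputable def U (hA : A.IsHermitian) : Matrix (Fin d) (Fin d) ℝ :=
  (Matrix.IsHermitian.eigenvectorUnitary hA : Matrix (Fin d) (Fin d) ℝ)

lemma U_star_mul : star (U hA) * U hA = 1 := Unitary.coe_star_mul_self _

lemma U_mul_star : U hA * star (U hA) = 1 := Unitary.coe_mul_star_self _

lemma spec : A = U hA * diagonal hA.eigenvalues * star (U hA) := by
  have := hA.spectral_theorem
  simpa [U, RCLike.ofReal_real_eq_id] using this

lemma trace_mul_eq_sum (B : Matrix (Fin d) (Fin d) ℝ) :
    (B * A).trace = ∑ i, (star (U hA) * B * U hA) i i * hA.eigenvalues i := by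
  conv_lhs => rw [spec hA]
  rw [← Matrix.mul_assoc, ← Matrix.mul_assoc, Matrix.trace_mul_comm,
    ← Matrix.mul_assoc, trace_mul_diag]
  simp [Matrix.mul_assoc]

lemma trace_conj (B : Matrix (Fin d) (Fin d) ℝ) :
    (star (U hA) * B * U hA).trace = B.trace := by
  rw [Matrix.trace_mul_comm, ← Matrix.mul_assoc, U_mul_star, Matrix.one_mul]

end Spec

section Spec2
variable {A : Matrix (Fin d) (Fin d) ℝ} (hA : A.IsHermitian)

lemma trace_eq_sum : A.trace = ∑ i, hA.eigenvalues i := by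
  have h := trace_mul_eq_sum hA 1
  simpa [U_star_mul hA] using h

lemma det_eq_prod : A.det = ∏ i, hA.eigenvalues i := by
  simpa using hA.det_eq_prod_eigenvalues

end Spec2

lemma lam_le_trace_mul {A : Matrix (Fin d) (Fin d) ℝ} (hA : A.PosSemidef) {lam : ℝ}
    (hlam_le : ∀ i, lam ≤ hA.isHermitian.eigenvalues i)
    {B : Matrix (Fin d) (Fin d) ℝ} (hB : B.PosSemidef) (hBtr : B.trace = 1) :
    lam ≤ (B * A).trace := by
  set M := star (U hA.isHermitian) * B * (U hA.isHermitian) with hMdef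
  have hM : M.PosSemidef := by
    rw [hMdef, Matrix.star_eq_conjTranspose]
    exact hB.conjTranspose_mul_mul_same _
  have hMtr : ∑ i, M i i = 1 := by
    have := trace_conj hA.isHermitian B
    rw [← hMdef] at this
    rw [show (∑ i, M i i) = M.trace from rfl, this, hBtr]
  calc lam = ∑ i, M i i * lam := by rw [← Finset.sum_mul, hMtr, one_mul]
    _ ≤ ∑ i, M i i * hA.isHermitian.eigenvalues i := by
        apply Finset.sum_le_sum
        intro i _
        exact mul_le_mul_of_nonneg_left (hlam_le i) (psd_diag_nonneg hM i)
    _ = (B * A).trace := (trace_mul_eq_sum hA.isHermitian B).symm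

lemma det_le_one {B : Matrix (Fin d) (Fin d) ℝ} (hB : B.PosSemidef) (hBtr : B.trace = 1) :
    B.det ≤ 1 := by
  rw [det_eq_prod hB.isHermitian]
  apply Finset.prod_le_one
  · intro i _; exact hB.eigenvalues_nonneg i
  · intro i _
    calc hB.isHermitian.eigenvalues i ≤ ∑ j, hB.isHermitian.eigenvalues j :=
          Finset.single_le_sum (fun j _ => hB.eigenvalues_nonneg j) (Finset.mem_univ i)
      _ = 1 := by rw [← trace_eq_sum hB.isHermitian, hBtr]

lemma det_nonneg' {B : Matrix (Fin d) (Fin d) ℝ} (hB : B.PosSemidef) : 0 ≤ B.det := by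
  rw [det_eq_prod hB.isHermitian]
  exact Finset.prod_nonneg fun i _ => hB.eigenvalues_nonneg i


lemma conj_diag_facts {A : Matrix (Fin d) (Fin d) ℝ} (hA : A.IsHermitian)
    (b : Fin d → ℝ) (hb : ∀ i, 0 ≤ b i) :
    (U hA * diagonal b * star (U hA)).PosSemidef ∧
    (U hA * diagonal b * star (U hA)).trace = ∑ i, b i ∧
    (U hA * diagonal b * star (U hA)).det = ∏ i, b i ∧
    ((U hA * diagonal b * star (U hA)) * A).trace = ∑ i, b i * hA.eigenvalues i := by
  have hdetU : (star (U hA)).det * (U hA).det = 1 := by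
    rw [← Matrix.det_mul, U_star_mul, Matrix.det_one]
  refine ⟨?_, ?_, ?_, ?_⟩
  · rw [Matrix.star_eq_conjTranspose]
    exact (Matrix.posSemidef_diagonal_iff.mpr hb).mul_mul_conjTranspose_same _
  · rw [Matrix.trace_mul_comm, ← Matrix.mul_assoc, U_star_mul, Matrix.one_mul,
      Matrix.trace_diagonal]
  · rw [Matrix.det_mul, Matrix.det_mul, Matrix.det_diagonal]
    linear_combination (∏ i, b i) * hdetU
  · rw [trace_mul_eq_sum hA]
    have key : star (U hA) * (U hA * diagonal b * star (U hA)) * U hA = diagonal b := by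
      simp only [Matrix.mul_assoc, U_star_mul, Matrix.mul_one]
      rw [← Matrix.mul_assoc, U_star_mul, Matrix.one_mul]
    rw [key]
    simp [Matrix.diagonal_apply_eq]

end Stmt6Aux

set_option maxHeartbeats 1000000 in
/-- For PSD A with smallest eigenvalue λ and g > 0 one has H(A,g) > −λ and every
maximizer of the supremum defining H(A,g) is invertible, i.e. has positive determinant. -/
theorem stmt_6 (d : ℕ) (hd : 2 ≤ d) (A : Matrix (Fin d) (Fin d) ℝ) (hA : A.PosSemidef)
    (lam : ℝ)
    (hlam_mem : ∃ i, hA.isHermitian.eigenvalues i = lam)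
    (hlam_le : ∀ i, lam ≤ hA.isHermitian.eigenvalues i)
    (g : ℝ) (hg : 0 < g) :
    -lam < bellman d A g ∧
    ∀ B' ∈ S1set d, bval d A B' g = bellman d A g → 0 < B'.det := by
  classical
  obtain ⟨i0, hi0⟩ := hlam_mem
  have hH := hA.isHermitian
  have hlam0 : 0 ≤ lam := hi0 ▸ hA.eigenvalues_nonneg i0
  have hd0 : (0:ℝ) < d := by
    have : 0 < d := by omega
    exact_mod_cast this
  have hd1 : (2:ℝ) ≤ d := by exact_mod_cast hd
  have htrA : 0 ≤ A.trace := by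
    rw [Stmt6Aux.trace_eq_sum hA.isHermitian]
    exact Finset.sum_nonneg fun i _ => hA.eigenvalues_nonneg i
  -- boundedness
  have hbdd : BddAbove ((fun B => bval d A B g) '' S1set d) := by
    refine ⟨g, ?_⟩
    rintro y ⟨B, ⟨hBpsd, hBtr⟩, rfl⟩
    have h1 : 0 ≤ (B * A).trace :=
      le_trans hlam0 (Stmt6Aux.lam_le_trace_mul hA hlam_le hBpsd hBtr)
    have h2 : B.det ^ ((1:ℝ)/d) ≤ 1 :=
      Real.rpow_le_one (Stmt6Aux.det_nonneg' hBpsd) (Stmt6Aux.det_le_one hBpsd hBtr)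
        (by positivity)
    have h3 := mul_le_mul_of_nonneg_left h2 hg.le
    simp only [bval]
    nlinarith
  -- construction of a good competitor
  set s : ℝ := min (1/(2*d)) (g/(2*(A.trace+1))) with hs_def
  have hs_pos : 0 < s := lt_min (by positivity) (by positivity)
  have hs_le : s ≤ 1/(2*d) := min_le_left _ _
  have hs_le2 : s ≤ g/(2*(A.trace+1)) := min_le_right _ _
  have hs_le1 : s ≤ 1 := le_trans hs_le (by rw [div_le_one (by positivity)]; nlinarith)
  set t : ℝ := s^d with ht_def
  have ht_pos : 0 < t := pow_pos hs_pos d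
  have ht_le_s : t ≤ s := pow_le_of_le_one hs_pos.le hs_le1 (by omega)
  have hdt : (d:ℝ) * t ≤ 1/2 := by
    have h1 : (d:ℝ) * t ≤ (d:ℝ) * s := by nlinarith
    have h2 : (d:ℝ) * s ≤ (d:ℝ) * (1/(2*d)) := by nlinarith
    have h3 : (d:ℝ) * (1/(2*d)) = 1/2 := by field_simp
    linarith
  set c : ℝ := (d:ℝ) - 1 with hc_def
  have hc0 : 0 ≤ c := by rw [hc_def]; linarith
  have hct : c * t ≤ 1/2 := by nlinarith
  set b : Fin d → ℝ := fun i => if i = i0 then 1 - c*t else t with hb_def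
  have hbt : (0:ℝ) ≤ 1 - c * t := by nlinarith
  have hb : ∀ i, 0 ≤ b i := by
    intro i
    rw [hb_def]
    dsimp only
    split
    · exact hbt
    · exact ht_pos.le
  have hcard : (Finset.univ.erase i0).card = d - 1 := by
    rw [Finset.card_erase_of_mem (Finset.mem_univ _), Finset.card_univ, Fintype.card_fin]
  have hcast : ((d-1 : ℕ):ℝ) = c := by
    rw [hc_def, Nat.cast_sub (by omega : 1 ≤ d)]; norm_num
  have hbe : ∀ i ∈ Finset.univ.erase i0, b i = t := by
    intro i hi
    simp [hb_def, Finset.ne_of_mem_erase hi]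
  have hsum : ∑ i, b i = 1 := by
    rw [← Finset.add_sum_erase _ b (Finset.mem_univ i0), Finset.sum_congr rfl hbe,
      Finset.sum_const, hcard, nsmul_eq_mul, hcast]
    simp only [hb_def, if_true]
    ring
  have hprod : ∏ i, b i = (1 - c*t) * t^(d-1) := by
    rw [← Finset.mul_prod_erase _ b (Finset.mem_univ i0), Finset.prod_congr rfl hbe,
      Finset.prod_const, hcard]
    simp only [hb_def, if_true]
  have htr_erase : ∑ i ∈ Finset.univ.erase i0, hA.isHermitian.eigenvalues i
      = A.trace - lam := by
    have h := Finset.add_sum_erase Finset.univ hA.isHermitian.eigenvalues (Finset.mem_univ i0)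
    rw [hi0] at h
    rw [Stmt6Aux.trace_eq_sum hA.isHermitian]
    linarith
  have hsum2 : ∑ i, b i * hA.isHermitian.eigenvalues i
      = (1-c*t)*lam + t*(A.trace - lam) := by
    rw [← Finset.add_sum_erase _ _ (Finset.mem_univ i0)]
    have h1 : b i0 * hA.isHermitian.eigenvalues i0 = (1-c*t)*lam := by
      simp only [hb_def, if_true, hi0]
    have h2 : ∑ i ∈ Finset.univ.erase i0, b i * hA.isHermitian.eigenvalues i
        = t * (A.trace - lam) := by
      rw [Finset.sum_congr rfl (fun i hi => by rw [hbe i hi]), ← Finset.mul_sum, htr_erase]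
    rw [h1, h2]
  have hsum3 : ∑ i, b i * hA.isHermitian.eigenvalues i ≤ lam + t * A.trace := by
    rw [hsum2, hc_def]
    nlinarith [mul_nonneg ht_pos.le hlam0]
  set B0 : Matrix (Fin d) (Fin d) ℝ :=
    Stmt6Aux.U hA.isHermitian * Matrix.diagonal b * star (Stmt6Aux.U hA.isHermitian) with hB0_def
  obtain ⟨hB0psd, hB0tr, hB0det, hB0mul⟩ := Stmt6Aux.conj_diag_facts hA.isHermitian b hb
  have hB0tr1 : B0.trace = 1 := by rw [hB0_def, hB0tr, hsum]
  have hB0det' : B0.det = (1-c*t) * t^(d-1) := by rw [hB0_def, hB0det, hprod]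
  have hdet_ge : (1/2) * s^(d*(d-1)) ≤ B0.det := by
    rw [hB0det', show t^(d-1) = s^(d*(d-1)) by rw [ht_def, ← pow_mul]]
    exact mul_le_mul_of_nonneg_right (by linarith) (pow_nonneg hs_pos.le _)
  have hrpow_eq : ((1/2) * s^(d*(d-1))) ^ ((1:ℝ)/d) = (1/2:ℝ)^((1:ℝ)/d) * s^(d-1) := by
    rw [Real.mul_rpow (by norm_num) (pow_nonneg hs_pos.le _)]
    congr 1
    rw [← Real.rpow_natCast s (d*(d-1)), ← Real.rpow_mul hs_pos.le,
      ← Real.rpow_natCast s (d-1)]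
    congr 1
    have hdne : (d:ℝ) ≠ 0 := ne_of_gt hd0
    push_cast [Nat.cast_sub (by omega : 1 ≤ d)]
    field_simp
  have hhalf : (1/2:ℝ) ≤ (1/2:ℝ)^((1:ℝ)/d) := by
    have h := Real.rpow_le_rpow_of_exponent_ge (x := (1/2:ℝ)) (by norm_num) (by norm_num)
      (show (1:ℝ)/d ≤ 1 by rw [div_le_one hd0]; linarith)
    simpa using h
  have hrpow_ge : (1/2) * s^(d-1) ≤ B0.det ^ ((1:ℝ)/d) := by
    calc (1/2) * s^(d-1) ≤ (1/2:ℝ)^((1:ℝ)/d) * s^(d-1) :=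
          mul_le_mul_of_nonneg_right hhalf (pow_nonneg hs_pos.le _)
      _ = ((1/2) * s^(d*(d-1))) ^ ((1:ℝ)/d) := hrpow_eq.symm
      _ ≤ B0.det ^ ((1:ℝ)/d) := Real.rpow_le_rpow (by positivity) hdet_ge (by positivity)
  have hst : s * A.trace < g/2 := by
    rw [le_div_iff₀ (by positivity)] at hs_le2
    nlinarith
  have httr : t * A.trace < g * ((1/2) * s^(d-1)) := by
    have h1 : t = s^(d-1) * s := by rw [ht_def, ← pow_succ]; congr 1; omega
    have h2 : s^(d-1) * (s * A.trace) < s^(d-1) * (g/2) :=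
      mul_lt_mul_of_pos_left hst (pow_pos hs_pos _)
    rw [h1]; ring_nf; ring_nf at h2; linarith
  have hbval : -lam < bval d A B0 g := by
    have h1 : (B0 * A).trace ≤ lam + t * A.trace := by
      rw [hB0_def, hB0mul]; exact hsum3
    have h2 : g * ((1/2) * s^(d-1)) ≤ g * (B0.det ^ ((1:ℝ)/d)) :=
      mul_le_mul_of_nonneg_left hrpow_ge hg.le
    show -lam < -((B0 * A).trace) + g * B0.det ^ ((1:ℝ)/d)
    nlinarith
  have hpart1 : -lam < bellman d A g :=
    lt_of_lt_of_le hbval (le_csSup hbdd ⟨B0, ⟨hB0psd, hB0tr1⟩, rfl⟩)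
  refine ⟨hpart1, ?_⟩
  rintro B' ⟨hB'psd, hB'tr⟩ hmax
  rcases (Stmt6Aux.det_nonneg' hB'psd).lt_or_eq with h | h
  · exact h
  · exfalso
    have hb' : bval d A B' g = -((B' * A).trace) := by
      show -((B' * A).trace) + g * B'.det ^ ((1:ℝ)/d) = -((B' * A).trace)
      rw [← h, Real.zero_rpow (ne_of_gt (by positivity)), mul_zero, add_zero]
    have hle : bval d A B' g ≤ -lam := by
      rw [hb']
      linarith [Stmt6Aux.lam_le_trace_mul hA hlam_le hB'psd hB'tr]
    rw [hmax] at hle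
    linarith
end

section
/- Let Ω ⊆ ℝ^d be a bounded open set and f : Ω → [0,∞) continuous. Suppose u : Ω → ℝ is upper semicontinuous, convex on Ω, and is a viscosity subsolution of the Bellman equation, i.e. for every φ ∈ C²(Ω) such that u − φ attains a local maximum at x ∈ Ω one has H(D²φ(x), f(x)) ≤ 0. Then u is a viscosity subsolution of the Monge–Ampère equation on the set of convex functions: for every convex φ ∈ C²(Ω) such that u − φ attains a local maximum at x ∈ Ω, one has M(D²φ(x), f(x)) ≤ 0. -/
open Matrix Set

namespace MAaux

variable {d : ℕ}

lemma psd_diag_nonneg {B : Matrix (Fin d) (Fin d) ℝ} (hB : B.PosSemidef) (i : Fin d) :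
    0 ≤ B i i := by
  have := hB.dotProduct_mulVec_nonneg (Pi.single i 1)
  simpa [Matrix.mulVec_single, dotProduct_single] using this

lemma psd_entry_sq_le {B : Matrix (Fin d) (Fin d) ℝ} (hB : B.PosSemidef) (i j : Fin d) :
    B i j ^ 2 ≤ B i i * B j j := by
  have hsym : B j i = B i j := by
    conv_lhs => rw [← hB.1]
    simp [Matrix.conjTranspose_apply]
  have key : ∀ t : ℝ, 0 ≤ B j j * (t * t) + (2 * B i j) * t + B i i := by
    intro t
    have h0 := hB.dotProduct_mulVec_nonneg ((Pi.single i 1 : Fin d → ℝ) + t • (Pi.single j 1 : Fin d → ℝ))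
    simp only [star_trivial, Matrix.mulVec_add, Matrix.mulVec_smul, Matrix.mulVec_single,
      dotProduct_add, add_dotProduct, smul_dotProduct,
      dotProduct_smul, dotProduct_single, single_dotProduct,
      smul_eq_mul, mul_one, Matrix.col_apply, op_smul_eq_mul, one_mul] at h0
    rw [hsym] at h0
    nlinarith [h0]
  have hdisc := discrim_le_zero key
  rw [discrim] at hdisc
  nlinarith [hdisc]

lemma trace_eq_sum_eigs {B : Matrix (Fin d) (Fin d) ℝ} (hB : B.IsHermitian) :
    B.trace = ∑ i, hB.eigenvalues i := by
  conv_lhs => rw [hB.spectral_theorem, Unitary.conjStarAlgAut_apply]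
  rw [Matrix.trace_mul_comm, ← Matrix.mul_assoc,
    Matrix.mem_unitaryGroup_iff'.mp hB.eigenvectorUnitary.2, Matrix.one_mul,
    Matrix.trace_diagonal]
  simp [RCLike.ofReal_real_eq_id]

lemma psd_det_nonneg {B : Matrix (Fin d) (Fin d) ℝ} (hB : B.PosSemidef) : 0 ≤ B.det := by
  rw [hB.1.det_eq_prod_eigenvalues]
  refine Finset.prod_nonneg fun i _ => ?_
  have := hB.eigenvalues_nonneg i
  simpa [RCLike.ofReal_real_eq_id] using this

lemma psd_det_le_one {B : Matrix (Fin d) (Fin d) ℝ} (hB : B.PosSemidef)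
    (htr : B.trace = 1) : B.det ≤ 1 := by
  rw [hB.1.det_eq_prod_eigenvalues]
  have h1 : ∀ i ∈ Finset.univ, (0:ℝ) ≤ hB.1.eigenvalues i := fun i _ => hB.eigenvalues_nonneg i
  have h2 : ∀ i ∈ Finset.univ, hB.1.eigenvalues i ≤ 1 := by
    intro i _
    have htr' := trace_eq_sum_eigs hB.1
    rw [htr] at htr'
    calc hB.1.eigenvalues i ≤ ∑ j, hB.1.eigenvalues j :=
      Finset.single_le_sum h1 (Finset.mem_univ i)
    _ = 1 := htr'.symm
  have := Finset.prod_le_one h1 h2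
  simpa [RCLike.ofReal_real_eq_id] using this

lemma psd_smul {c : ℝ} (hc : 0 ≤ c) {B : Matrix (Fin d) (Fin d) ℝ} (hB : B.PosSemidef) :
    (c • B).PosSemidef := by
  refine Matrix.PosSemidef.of_dotProduct_mulVec_nonneg ?_ fun x => ?_
  · rw [Matrix.IsHermitian, Matrix.conjTranspose_smul, hB.1]; norm_num
  · rw [Matrix.smul_mulVec, dotProduct_smul, smul_eq_mul]
    exact mul_nonneg hc (hB.dotProduct_mulVec_nonneg x)

lemma vvT_psd (v : Fin d → ℝ) : (Matrix.vecMulVec v v).PosSemidef := by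
  refine Matrix.PosSemidef.of_dotProduct_mulVec_nonneg ?_ fun x => ?_
  · ext i j
    simp [Matrix.conjTranspose_apply, Matrix.vecMulVec_apply, mul_comm]
  · have h1 : Matrix.vecMulVec v v *ᵥ x = (v ⬝ᵥ x) • v := by
      ext i
      simp only [Matrix.mulVec, Matrix.vecMulVec_apply, dotProduct, Pi.smul_apply,
        smul_eq_mul, Finset.sum_mul, Finset.mul_sum]
      exact Finset.sum_congr rfl fun k _ => by ring
    rw [h1]
    simp only [star_trivial, dotProduct_smul, smul_eq_mul]
    rw [dotProduct_comm]
    exact mul_self_nonneg _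

lemma trace_vvT (v : Fin d → ℝ) : (Matrix.vecMulVec v v).trace = v ⬝ᵥ v := by
  simp [Matrix.trace, Matrix.diag, Matrix.vecMulVec_apply, dotProduct]

lemma trace_vvT_mul (v : Fin d → ℝ) (A : Matrix (Fin d) (Fin d) ℝ) :
    (Matrix.vecMulVec v v * A).trace = v ⬝ᵥ (A *ᵥ v) := by
  simp only [Matrix.trace, Matrix.diag, Matrix.mul_apply, Matrix.vecMulVec_apply,
    dotProduct, Matrix.mulVec]
  rw [Finset.sum_comm]
  congr 1; ext i
  rw [Finset.mul_sum]
  congr 1; ext j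
  ring

lemma bval_bound {A B : Matrix (Fin d) (Fin d) ℝ} {F : ℝ} (hB : B ∈ S1set d) :
    bval d A B F ≤ (∑ i, ∑ j, |A i j|) + |F| := by
  obtain ⟨hBp, hBt⟩ := hB
  have htr' : ∑ k, B k k = 1 := hBt
  have hent : ∀ i j, |B i j| ≤ 1 := by
    intro i j
    have h1 := psd_entry_sq_le hBp i j
    have hle1 : ∀ k, B k k ≤ 1 := by
      intro k
      have := Finset.single_le_sum (f := fun k => B k k)
        (fun k _ => psd_diag_nonneg hBp k) (Finset.mem_univ k)
      rw [htr'] at this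
      exact this
    have h2 : B i j ^ 2 ≤ 1 := le_trans h1 (by
      have := psd_diag_nonneg hBp i
      have := psd_diag_nonneg hBp j
      nlinarith [hle1 i, hle1 j])
    nlinarith [abs_nonneg (B i j), sq_abs (B i j), abs_le_abs (le_refl (B i j))]
  have hdet0 : 0 ≤ B.det := psd_det_nonneg hBp
  have hdet1 : B.det ≤ 1 := psd_det_le_one hBp hBt
  have hr1 : B.det ^ ((1:ℝ)/d) ≤ 1 := Real.rpow_le_one hdet0 hdet1 (by positivity)
  have hr0 : 0 ≤ B.det ^ ((1:ℝ)/d) := Real.rpow_nonneg hdet0 _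
  have hF : F * B.det ^ ((1:ℝ)/d) ≤ |F| := by
    calc F * B.det ^ ((1:ℝ)/d) ≤ |F * B.det ^ ((1:ℝ)/d)| := le_abs_self _
    _ = |F| * |B.det ^ ((1:ℝ)/d)| := abs_mul _ _
    _ ≤ |F| * 1 := by
        refine mul_le_mul_of_nonneg_left ?_ (abs_nonneg F)
        rw [abs_of_nonneg hr0]; exact hr1
    _ = |F| := mul_one _
  have htrace : -((B * A).trace) ≤ ∑ i, ∑ j, |A i j| := by
    have hTr : (B * A).trace = ∑ i, ∑ j, B i j * A j i := by
      simp [Matrix.trace, Matrix.diag, Matrix.mul_apply]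
    rw [hTr, ← Finset.sum_neg_distrib]
    have : ∀ i ∈ Finset.univ, -∑ j, B i j * A j i ≤ ∑ j, |A j i| := by
      intro i _
      rw [← Finset.sum_neg_distrib]
      refine Finset.sum_le_sum fun j _ => ?_
      calc -(B i j * A j i) ≤ |B i j * A j i| := neg_le_abs _
      _ = |B i j| * |A j i| := abs_mul _ _
      _ ≤ 1 * |A j i| := mul_le_mul_of_nonneg_right (hent i j) (abs_nonneg _)
      _ = |A j i| := one_mul _
    calc ∑ i, -∑ j, B i j * A j i ≤ ∑ i, ∑ j, |A j i| := Finset.sum_le_sum this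
    _ = ∑ i, ∑ j, |A i j| := Finset.sum_comm
  rw [bval]
  linarith

lemma key_of_bellman {A : Matrix (Fin d) (Fin d) ℝ} {F : ℝ}
    (hbell : bellman d A F ≤ 0) : ∀ B ∈ S1set d, bval d A B F ≤ 0 := by
  intro B hB
  have hmem : bval d A B F ∈ (fun B => bval d A B F) '' S1set d := mem_image_of_mem _ hB
  have hbdd : BddAbove ((fun B => bval d A B F) '' S1set d) := by
    refine ⟨(∑ i, ∑ j, |A i j|) + |F|, ?_⟩
    rintro y ⟨B', hB', rfl⟩
    exact bval_bound hB'
  exact le_trans (le_csSup hbdd hmem) hbell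

lemma psd_of_key {A : Matrix (Fin d) (Fin d) ℝ} {F : ℝ} (hherm : A.IsHermitian)
    (hF : 0 ≤ F) (hkey : ∀ B ∈ S1set d, bval d A B F ≤ 0) : A.PosSemidef := by
  refine Matrix.PosSemidef.of_dotProduct_mulVec_nonneg hherm fun v => ?_
  by_cases hv : v = 0
  · simp [hv]
  · have hvv : 0 < v ⬝ᵥ v := by
      have := Matrix.dotProduct_star_self_pos_iff (v := v).mpr hv
      simpa using this
    set c : ℝ := (v ⬝ᵥ v)⁻¹ with hc
    have hcpos : 0 < c := inv_pos.2 hvv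
    set B : Matrix (Fin d) (Fin d) ℝ := c • Matrix.vecMulVec v v with hBdef
    have hBpsd : B.PosSemidef := psd_smul hcpos.le (vvT_psd v)
    have hmem : B ∈ S1set d := by
      refine ⟨hBpsd, ?_⟩
      rw [hBdef, Matrix.trace_smul, trace_vvT, smul_eq_mul, hc,
        inv_mul_cancel₀ (ne_of_gt hvv)]
    have hb := hkey B hmem
    rw [bval] at hb
    have hrnn : 0 ≤ F * B.det ^ ((1:ℝ)/d) :=
      mul_nonneg hF (Real.rpow_nonneg (psd_det_nonneg hBpsd) _)
    have htrnn : 0 ≤ (B * A).trace := by linarith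
    have htr : (B * A).trace = c * (v ⬝ᵥ (A *ᵥ v)) := by
      rw [hBdef, Matrix.smul_mul, Matrix.trace_smul, trace_vvT_mul, smul_eq_mul]
    rw [htr] at htrnn
    have : 0 ≤ v ⬝ᵥ (A *ᵥ v) := nonneg_of_mul_nonneg_right htrnn hcpos
    simpa using this

lemma pd_trace_pos (hd : 2 ≤ d) {M : Matrix (Fin d) (Fin d) ℝ} (hM : M.PosDef) :
    0 < M.trace := by
  have hne : Nonempty (Fin d) := ⟨⟨0, by omega⟩⟩
  have hdiag : ∀ i, 0 < M i i := by
    intro i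
    have hne0 : (Pi.single i 1 : Fin d → ℝ) ≠ 0 := by
      intro h
      have := congrFun h i
      simp at this
    have := hM.dotProduct_mulVec_pos hne0
    simpa [Matrix.mulVec_single, dotProduct_single] using this
  exact Finset.sum_pos (fun i _ => hdiag i) Finset.univ_nonempty

lemma step_ineq (hd : 2 ≤ d) {A : Matrix (Fin d) (Fin d) ℝ} {F : ℝ} (hA : A.PosSemidef)
    (hF : 0 ≤ F) (hkey : ∀ B ∈ S1set d, bval d A B F ≤ 0) {ε : ℝ} (hε : 0 < ε) :
    (F / d) ^ d ≤ (A + ε • 1).det := by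
  have hdpos : (0:ℝ) < d := by
    have : (2:ℝ) ≤ d := by exact_mod_cast hd
    linarith
  have hd0 : (d:ℝ) ≠ 0 := ne_of_gt hdpos
  set M := A + ε • (1 : Matrix (Fin d) (Fin d) ℝ) with hMdef
  have hεI : (ε • (1 : Matrix (Fin d) (Fin d) ℝ)).PosDef := by
    rw [Matrix.smul_one_eq_diagonal]
    exact Matrix.PosDef.diagonal fun _ => hε
  have hMpd : M.PosDef := Matrix.PosDef.posSemidef_add hA hεI
  have hinv : M⁻¹.PosDef := hMpd.inv
  have hMdet : 0 < M.det := hMpd.det_pos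
  have hMunit : IsUnit M.det := isUnit_iff_ne_zero.mpr (ne_of_gt hMdet)
  set t := M⁻¹.trace with ht
  have htpos : 0 < t := pd_trace_pos hd hinv
  set c := t⁻¹ with hc
  have hcpos : 0 < c := inv_pos.2 htpos
  have hBmem : (c • M⁻¹) ∈ S1set d := by
    refine ⟨psd_smul hcpos.le hinv.posSemidef, ?_⟩
    rw [Matrix.trace_smul, smul_eq_mul, ← ht, hc, inv_mul_cancel₀ (ne_of_gt htpos)]
  have hb := hkey _ hBmem
  rw [bval] at hb
  have hMA : M⁻¹ * A = 1 - ε • M⁻¹ := by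
    have hAeq : A = M - ε • (1 : Matrix (Fin d) (Fin d) ℝ) := by
      rw [hMdef]; abel
    rw [hAeq, Matrix.mul_sub, Matrix.nonsing_inv_mul _ hMunit, Matrix.mul_smul, Matrix.mul_one]
  have htr : ((c • M⁻¹) * A).trace = c * ((d : ℝ) - ε * t) := by
    rw [Matrix.smul_mul, Matrix.trace_smul, hMA, Matrix.trace_sub, Matrix.trace_one,
      Matrix.trace_smul, ← ht]
    simp [mul_sub]
  have hdetB : (c • M⁻¹).det = c ^ d * M.det⁻¹ := by
    rw [Matrix.det_smul, Matrix.det_nonsing_inv, Ring.inverse_eq_inv', Fintype.card_fin]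
  set z : ℝ := M.det ^ ((1:ℝ)/d) with hz
  have hzpos : 0 < z := Real.rpow_pos_of_pos hMdet _
  have hrpow : ((c • M⁻¹).det) ^ ((1:ℝ)/d) = c * z⁻¹ := by
    rw [hdetB, Real.mul_rpow (pow_nonneg hcpos.le d) (inv_nonneg.2 hMdet.le)]
    congr 1
    · rw [← Real.rpow_natCast c d, ← Real.rpow_mul hcpos.le, mul_one_div_cancel hd0,
        Real.rpow_one]
    · rw [Real.inv_rpow hMdet.le]
  rw [htr, hrpow] at hb
  have hFz : F * z⁻¹ ≤ (d : ℝ) := by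
    have h1 : F * (c * z⁻¹) ≤ c * ((d:ℝ) - ε * t) := by linarith
    have h2 : c * (F * z⁻¹) ≤ c * (d : ℝ) := by
      calc c * (F * z⁻¹) = F * (c * z⁻¹) := by ring
      _ ≤ c * ((d:ℝ) - ε * t) := h1
      _ ≤ c * (d : ℝ) := by
          have : (0:ℝ) < ε * t := mul_pos hε htpos
          nlinarith
    exact le_of_mul_le_mul_left h2 hcpos
  have hFdz : F / d ≤ z := by
    rw [div_le_iff₀ hdpos]
    calc F = F * z⁻¹ * z := by field_simp
    _ ≤ (d:ℝ) * z := mul_le_mul_of_nonneg_right hFz hzpos.le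
    _ = z * d := by ring
  have hzd : z ^ d = M.det := by
    rw [hz, one_div, Real.rpow_inv_natCast_pow hMdet.le (by omega)]
  calc (F / d) ^ d ≤ z ^ d := pow_le_pow_left₀ (div_nonneg hF hdpos.le) hFdz d
  _ = M.det := hzd

lemma hessian_symm {Ω : Set (Fin d → ℝ)} (hΩo : IsOpen Ω)
    {φ : (Fin d → ℝ) → ℝ} (hφ : ContDiffOn ℝ 2 φ Ω) {x : Fin d → ℝ} (hx : x ∈ Ω)
    (i j : Fin d) : hessianM d φ x i j = hessianM d φ x j i := by
  have hca : ContDiffAt ℝ 2 φ x := hφ.contDiffAt (hΩo.mem_nhds hx)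
  have hs := hca.isSymmSndFDerivAt (by norm_num)
  simp only [hessianM, iteratedFDeriv_two_apply]
  simpa using hs.eq (Pi.single i 1) (Pi.single j 1)

end MAaux

open MAaux in
/-- A convex viscosity subsolution of the Bellman equation is a viscosity subsolution of
the Monge–Ampère equation on the set of convex functions. -/
theorem stmt_10 (d : ℕ) (hd : 2 ≤ d) (Ω : Set (Fin d → ℝ)) (hΩo : IsOpen Ω)
    (hΩb : Bornology.IsBounded Ω)
    (f : (Fin d → ℝ) → ℝ) (hfc : ContinuousOn f Ω) (hf0 : ∀ x ∈ Ω, 0 ≤ f x)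
    (u : (Fin d → ℝ) → ℝ) (husc : UpperSemicontinuousOn u Ω) (hucvx : ConvexOn ℝ Ω u)
    (hsub : ∀ φ : (Fin d → ℝ) → ℝ, ContDiffOn ℝ 2 φ Ω →
      ∀ x ∈ Ω, IsLocalMaxOn (fun y => u y - φ y) Ω x →
        bellman d (hessianM d φ x) (f x) ≤ 0) :
    ∀ φ : (Fin d → ℝ) → ℝ, ContDiffOn ℝ 2 φ Ω → ConvexOn ℝ Ω φ →
      ∀ x ∈ Ω, IsLocalMaxOn (fun y => u y - φ y) Ω x →
        MAop d (hessianM d φ x) (f x) ≤ 0 := by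
  intro φ hφ hφcvx x hx hmax
  have hbell := hsub φ hφ x hx hmax
  set A := hessianM d φ x with hA
  have hherm : A.IsHermitian := by
    ext i j
    simp only [Matrix.conjTranspose_apply, star_trivial]
    exact hessian_symm hΩo hφ hx j i
  have hF : 0 ≤ f x := hf0 x hx
  have hkey := key_of_bellman hbell
  have hApsd : A.PosSemidef := psd_of_key hherm hF hkey
  rw [MAop, sub_nonpos]
  -- limit argument
  have hstep : ∀ ε : ℝ, 0 < ε → (f x / d) ^ d ≤ (A + ε • 1).det :=
    fun ε hε => step_ineq hd hApsd hF hkey hε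
  have hcont : Filter.Tendsto (fun ε : ℝ => (A + ε • (1 : Matrix (Fin d) (Fin d) ℝ)).det)
      (nhdsWithin 0 (Ioi 0)) (nhds A.det) := by
    have hc : Continuous fun ε : ℝ => (A + ε • (1 : Matrix (Fin d) (Fin d) ℝ)).det := by
      refine Continuous.matrix_det ?_
      continuity
    have h0 : (A + (0:ℝ) • (1 : Matrix (Fin d) (Fin d) ℝ)).det = A.det := by simp
    have := Filter.Tendsto.mono_left (hc.tendsto 0) (nhdsWithin_le_nhds (s := Ioi (0:ℝ)))
    rwa [h0] at this
  refine ge_of_tendsto hcont ?_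
  filter_upwards [self_mem_nhdsWithin] with ε hε
  exact hstep ε hε
end

section
/- Let Ω ⊆ ℝ^d be a bounded open set and f : Ω → [0,∞) continuous. Suppose u : Ω → ℝ is lower semicontinuous, convex on Ω, and is a viscosity supersolution of the Bellman equation, i.e. for every φ ∈ C²(Ω) such that u − φ attains a local minimum at x ∈ Ω one has H(D²φ(x), f(x)) ≥ 0. Then u is a viscosity supersolution of the Monge–Ampère equation on the set of convex functions: for every convex φ ∈ C²(Ω) such that u − φ attains a local minimum at x ∈ Ω, one has M(D²φ(x), f(x)) ≥ 0. -/
open Matrix Set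

section SqrtCompat

open scoped MatrixOrder

noncomputable def Matrix.PosSemidef.sqrt {d : ℕ} {A : Matrix (Fin d) (Fin d) ℝ}
    (_hA : A.PosSemidef) : Matrix (Fin d) (Fin d) ℝ :=
  CFC.sqrt A

lemma Matrix.PosSemidef.sqrt_mul_self {d : ℕ} {A : Matrix (Fin d) (Fin d) ℝ}
    (hA : A.PosSemidef) : hA.sqrt * hA.sqrt = A :=
  CFC.sqrt_mul_sqrt_self A hA.nonneg

lemma Matrix.PosSemidef.posSemidef_sqrt {d : ℕ} {A : Matrix (Fin d) (Fin d) ℝ}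
    (hA : A.PosSemidef) : hA.sqrt.PosSemidef :=
  (CFC.sqrt_nonneg A).posSemidef

end SqrtCompat

-- trace = sum of eigenvalues, real case
lemma trace_eq_sum_eig {d : ℕ} {A : Matrix (Fin d) (Fin d) ℝ} (hA : A.IsHermitian) :
    A.trace = ∑ i, hA.eigenvalues i := by
  conv_lhs => rw [hA.spectral_theorem, Unitary.conjStarAlgAut_apply]
  rw [Matrix.trace_mul_cycle]
  rw [show (star (hA.eigenvectorUnitary : Matrix (Fin d) (Fin d) ℝ)) *
      (hA.eigenvectorUnitary : Matrix (Fin d) (Fin d) ℝ) = 1 from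
    Matrix.mem_unitaryGroup_iff'.mp hA.eigenvectorUnitary.2]
  simp [Matrix.trace_diagonal]

-- AM-GM for PSD matrices
lemma amgm_psd {d : ℕ} (hd : 0 < d) {C : Matrix (Fin d) (Fin d) ℝ} (hC : C.PosSemidef) :
    (d : ℝ) * C.det ^ ((1 : ℝ) / d) ≤ C.trace := by
  have hev : ∀ i, 0 ≤ hC.1.eigenvalues i := hC.eigenvalues_nonneg
  have hdet : C.det = ∏ i, hC.1.eigenvalues i := by
    rw [hC.1.det_eq_prod_eigenvalues]; norm_num
  have h1 : C.det ^ ((1:ℝ)/d) = ∏ i, (hC.1.eigenvalues i) ^ ((1:ℝ)/d) := by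
    rw [hdet, ← Real.finset_prod_rpow _ _ (fun i _ => hev i)]
  have h2 : (∏ i, (hC.1.eigenvalues i) ^ ((1:ℝ)/d)) ≤ ∑ i, (1/d : ℝ) * hC.1.eigenvalues i := by
    apply Real.geom_mean_le_arith_mean_weighted
    · intro i _; positivity
    · simp [Finset.sum_const]
      field_simp
    · intro i _; exact hev i
  rw [trace_eq_sum_eig hC.1, h1]
  calc (d:ℝ) * ∏ i, (hC.1.eigenvalues i) ^ ((1:ℝ)/d)
      ≤ (d:ℝ) * ∑ i, (1/d : ℝ) * hC.1.eigenvalues i := by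
        apply mul_le_mul_of_nonneg_left h2 (by positivity)
    _ = ∑ i, hC.1.eigenvalues i := by
        rw [Finset.mul_sum]
        apply Finset.sum_congr rfl
        intro i _
        field_simp

lemma psd_det_nonneg_s11 {d : ℕ} {C : Matrix (Fin d) (Fin d) ℝ} (hC : C.PosSemidef) :
    0 ≤ C.det := by
  rw [hC.1.det_eq_prod_eigenvalues]
  have : (0:ℝ) ≤ ∏ i, hC.1.eigenvalues i :=
    Finset.prod_nonneg fun i _ => hC.eigenvalues_nonneg i
  simpa using this

lemma psd_trace_nonneg {d : ℕ} {C : Matrix (Fin d) (Fin d) ℝ} (hC : C.PosSemidef) :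
    0 ≤ C.trace := by
  rw [trace_eq_sum_eig hC.1]
  exact Finset.sum_nonneg fun i _ => hC.eigenvalues_nonneg i

lemma sqrt_conj_psd {d : ℕ} {A B : Matrix (Fin d) (Fin d) ℝ} (hA : A.PosSemidef)
    (hB : B.PosSemidef) : (hA.sqrt * B * hA.sqrt).PosSemidef := by
  have h := hB.mul_mul_conjTranspose_same hA.sqrt
  rwa [hA.posSemidef_sqrt.1] at h

lemma trace_sqrt_conj {d : ℕ} {A B : Matrix (Fin d) (Fin d) ℝ} (hA : A.PosSemidef) :
    (hA.sqrt * B * hA.sqrt).trace = (B * A).trace := by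
  rw [Matrix.trace_mul_cycle, hA.sqrt_mul_self, Matrix.trace_mul_comm]

lemma det_sqrt_conj {d : ℕ} {A B : Matrix (Fin d) (Fin d) ℝ} (hA : A.PosSemidef) :
    (hA.sqrt * B * hA.sqrt).det = B.det * A.det := by
  have h : hA.sqrt.det * hA.sqrt.det = A.det := by
    rw [← Matrix.det_mul, hA.sqrt_mul_self]
  rw [Matrix.det_mul, Matrix.det_mul, ← h]; ring

lemma trace_mul_psd_nonneg {d : ℕ} {A B : Matrix (Fin d) (Fin d) ℝ} (hA : A.PosSemidef)
    (hB : B.PosSemidef) : 0 ≤ (B * A).trace := by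
  rw [← trace_sqrt_conj hA]
  exact psd_trace_nonneg (sqrt_conj_psd hA hB)

-- A - m•1 is PSD for m the min eigenvalue
lemma sub_smul_one_psd {d : ℕ} {A : Matrix (Fin d) (Fin d) ℝ} (hA : A.IsHermitian) {m : ℝ}
    (hm : ∀ i, m ≤ hA.eigenvalues i) : (A - m • (1 : Matrix (Fin d) (Fin d) ℝ)).PosSemidef := by
  have hU : (hA.eigenvectorUnitary : Matrix (Fin d) (Fin d) ℝ) *
      star (hA.eigenvectorUnitary : Matrix (Fin d) (Fin d) ℝ) = 1 :=
    Matrix.mem_unitaryGroup_iff.mp hA.eigenvectorUnitary.2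
  set U : Matrix (Fin d) (Fin d) ℝ := (hA.eigenvectorUnitary : Matrix (Fin d) (Fin d) ℝ) with hUdef
  have key : A - m • (1 : Matrix (Fin d) (Fin d) ℝ)
      = U * (Matrix.diagonal (fun i => hA.eigenvalues i - m)) * star U := by
    have hD : Matrix.diagonal (fun i : Fin d => hA.eigenvalues i - m)
        = Matrix.diagonal (RCLike.ofReal ∘ hA.eigenvalues) - m • (1 : Matrix (Fin d) (Fin d) ℝ) := by
      rw [Matrix.smul_one_eq_diagonal, Matrix.diagonal_sub]
      rfl
    have hsp : A = U * Matrix.diagonal (RCLike.ofReal ∘ hA.eigenvalues) * star U := by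
      rw [hUdef]
      conv_lhs => rw [hA.spectral_theorem, Unitary.conjStarAlgAut_apply]
    rw [hD, Matrix.mul_sub, Matrix.sub_mul, ← hsp]
    congr 1
    rw [Matrix.mul_smul, Matrix.smul_mul, Matrix.mul_one, hU]
  rw [key, Matrix.star_eq_conjTranspose]
  exact (Matrix.posSemidef_diagonal_iff.mpr fun i => by linarith [hm i]).mul_mul_conjTranspose_same U

-- second directional derivative nonneg for convex C² functions
lemma snd_deriv_nonneg {d : ℕ} {Ω : Set (Fin d → ℝ)} (hΩo : IsOpen Ω)
    {φ : (Fin d → ℝ) → ℝ} (hφ : ContDiffOn ℝ 2 φ Ω) (hcvx : ConvexOn ℝ Ω φ)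
    {x : Fin d → ℝ} (hx : x ∈ Ω) (v : Fin d → ℝ) :
    0 ≤ fderiv ℝ (fderiv ℝ φ) x v v := by
  rcases eq_or_ne v 0 with rfl | hv
  · simp
  have hvn : 0 < ‖v‖ := norm_pos_iff.mpr hv
  obtain ⟨r, hr, hball⟩ := Metric.isOpen_iff.mp hΩo x hx
  set R : ℝ := r / ‖v‖ with hRdef
  have hR : 0 < R := by positivity
  set s : Set ℝ := Ioo (-R) R with hsdef
  have h0s : (0:ℝ) ∈ s := by constructor <;> simp [hR] <;> linarith
  set L : ℝ → (Fin d → ℝ) := fun t => x + t • v with hLdef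
  have hLmem : ∀ t ∈ s, L t ∈ Ω := by
    intro t ht
    apply hball
    rw [Metric.mem_ball, dist_eq_norm]
    have : L t - x = t • v := by simp [hLdef]
    rw [this, norm_smul, Real.norm_eq_abs]
    have habs : |t| < R := abs_lt.mpr ⟨ht.1, ht.2⟩
    calc |t| * ‖v‖ < R * ‖v‖ := mul_lt_mul_of_pos_right habs hvn
    _ = r := by rw [hRdef]; field_simp
  set g : ℝ → ℝ := fun t => φ (L t) with hgdef
  set g' : ℝ → ℝ := fun t => fderiv ℝ φ (L t) v with hg'def
  have hL : ∀ t : ℝ, HasDerivAt L v t := by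
    intro t
    simpa [hLdef] using ((hasDerivAt_id t).smul_const v).const_add x
  have hg : ∀ t ∈ s, HasDerivAt g (g' t) t := by
    intro t ht
    have hmem := hLmem t ht
    have hd1 : DifferentiableAt ℝ φ (L t) :=
      (hφ.contDiffAt (hΩo.mem_nhds hmem)).differentiableAt two_ne_zero
    exact hd1.hasFDerivAt.comp_hasDerivAt t (hL t)
  -- convexity of g on s
  have hgc : ConvexOn ℝ s g := by
    have haff : ∀ t : ℝ, (AffineMap.lineMap x (x + v) : ℝ →ᵃ[ℝ] (Fin d → ℝ)) t = L t := by
      intro t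
      simp [AffineMap.lineMap_apply, hLdef, add_comm]
    have h1 := hcvx.comp_affineMap (AffineMap.lineMap x (x + v) : ℝ →ᵃ[ℝ] (Fin d → ℝ))
    have h2 : ConvexOn ℝ s (φ ∘ (AffineMap.lineMap x (x + v) : ℝ →ᵃ[ℝ] (Fin d → ℝ))) := by
      apply h1.subset _ (convex_Ioo _ _)
      intro t ht
      rw [Set.mem_preimage, haff t]
      exact hLmem t ht
    have : (φ ∘ (AffineMap.lineMap x (x + v) : ℝ →ᵃ[ℝ] (Fin d → ℝ))) = g := by
      funext t; simp [Function.comp, haff t, hgdef]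
    rwa [this] at h2
  -- monotonicity of g' at 0
  have hmono : ∀ t ∈ s, 0 < t → g' 0 ≤ g' t := by
    intro t ht ht0
    have h1 : g' 0 ≤ slope g 0 t := hgc.le_slope_of_hasDerivAt h0s ht ht0 (hg 0 h0s)
    have h2 : slope g 0 t ≤ g' t := hgc.slope_le_of_hasDerivAt h0s ht ht0 (hg t ht)
    linarith
  -- second derivative of g at 0
  have hφx : ContDiffAt ℝ 2 φ x := hφ.contDiffAt (hΩo.mem_nhds hx)
  have hF : HasFDerivAt (fderiv ℝ φ) (fderiv ℝ (fderiv ℝ φ) x) x :=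
    ((hφx.fderiv_right (m := 1) (le_refl 2)).differentiableAt one_ne_zero).hasFDerivAt
  have hL0 : L 0 = x := by simp [hLdef]
  have hFL : HasDerivAt (fun t => fderiv ℝ φ (L t)) (fderiv ℝ (fderiv ℝ φ) x v) 0 := by
    rw [← hL0] at hF
    have := hF.comp_hasDerivAt 0 (hL 0)
    rw [hL0] at this
    exact this
  have h2 : HasDerivAt g' (fderiv ℝ (fderiv ℝ φ) x v v) 0 := by
    have := hFL.clm_apply (hasDerivAt_const 0 v)
    simpa [hg'def] using this
  -- conclude via slopes
  have htend : Filter.Tendsto (slope g' 0) (nhdsWithin 0 (Ioi 0))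
      (nhds (fderiv ℝ (fderiv ℝ φ) x v v)) := by
    apply (hasDerivAt_iff_tendsto_slope.mp h2).mono_left
    apply nhdsWithin_mono
    intro y hy
    exact Set.mem_compl_singleton_iff.mpr (ne_of_gt hy)
  have hev : ∀ᶠ t in nhdsWithin 0 (Ioi 0), 0 ≤ slope g' 0 t := by
    filter_upwards [Ioo_mem_nhdsGT_of_mem (Set.mem_Ico.mpr ⟨le_refl 0, hR⟩)] with t ht
    have hts : t ∈ s := ⟨by linarith [ht.1], ht.2⟩
    rw [slope_def_field]
    apply div_nonneg _ (by linarith [ht.1] : (0:ℝ) ≤ t - 0)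
    have := hmono t hts ht.1
    linarith
  exact ge_of_tendsto htend hev

lemma hessianM_apply {d : ℕ} (φ : (Fin d → ℝ) → ℝ) (x : Fin d → ℝ) (i j : Fin d) :
    hessianM d φ x i j = fderiv ℝ (fderiv ℝ φ) x (Pi.single i 1) (Pi.single j 1) := by
  rw [hessianM, iteratedFDeriv_two_apply]
  simp

lemma quad_form_eq {d : ℕ} (f'' : (Fin d → ℝ) →L[ℝ] (Fin d → ℝ) →L[ℝ] ℝ) (v : Fin d → ℝ) :
    f'' v v = ∑ i, ∑ j, v i * (f'' (Pi.single i 1) (Pi.single j 1) * v j) := by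
  have hv : v = ∑ i, v i • (Pi.single i 1 : Fin d → ℝ) := by
    funext j
    rw [Finset.sum_apply]
    simp [Pi.single_apply]
  have hcol : ∀ w : Fin d → ℝ, f'' v w = ∑ i, v i * f'' (Pi.single i 1) w := by
    intro w
    conv_lhs => rw [hv]
    rw [map_sum, ContinuousLinearMap.sum_apply]
    simp only [_root_.map_smul, ContinuousLinearMap.smul_apply, smul_eq_mul]
  have hrow : f'' v v = ∑ j, f'' v (Pi.single j 1) * v j := by
    conv_lhs => rw [hv]
    rw [map_sum]
    apply Finset.sum_congr rfl
    intro j _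
    rw [_root_.map_smul, smul_eq_mul, mul_comm, ← hv]
  rw [hrow]
  simp only [hcol, Finset.sum_mul]
  rw [Finset.sum_comm]
  apply Finset.sum_congr rfl
  intro i _
  apply Finset.sum_congr rfl
  intro j _
  ring

lemma hessian_psd {d : ℕ} {Ω : Set (Fin d → ℝ)} (hΩo : IsOpen Ω)
    {φ : (Fin d → ℝ) → ℝ} (hφ : ContDiffOn ℝ 2 φ Ω) (hcvx : ConvexOn ℝ Ω φ)
    {x : Fin d → ℝ} (hx : x ∈ Ω) : (hessianM d φ x).PosSemidef := by
  have hφx : ContDiffAt ℝ 2 φ x := hφ.contDiffAt (hΩo.mem_nhds hx)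
  have hsymm : ∀ v w, fderiv ℝ (fderiv ℝ φ) x v w = fderiv ℝ (fderiv ℝ φ) x w v :=
    hφx.isSymmSndFDerivAt (by simp)
  rw [Matrix.posSemidef_iff_dotProduct_mulVec]
  constructor
  · show (hessianM d φ x)ᴴ = hessianM d φ x
    ext i j
    rw [Matrix.conjTranspose_apply, hessianM_apply, hessianM_apply, star_trivial]
    exact hsymm _ _
  · intro v
    have h1 : star v ⬝ᵥ (hessianM d φ x) *ᵥ v
        = fderiv ℝ (fderiv ℝ φ) x v v := by
      rw [quad_form_eq]
      simp only [star_trivial, dotProduct, Matrix.mulVec, hessianM_apply]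
      exact Finset.sum_congr rfl fun i _ => by rw [Finset.mul_sum]
    rw [h1]
    exact snd_deriv_nonneg hΩo hφ hcvx hx v

lemma key_det_le {d : ℕ} (hd : 2 ≤ d) {A : Matrix (Fin d) (Fin d) ℝ} (hA : A.PosSemidef)
    {fx : ℝ} (hf : 0 ≤ fx) (hb : 0 ≤ bellman d A fx) : A.det ≤ (fx / d) ^ d := by
  by_contra hcon
  push_neg at hcon
  have hd0 : (0:ℝ) < d := by positivity
  have hdne : (d:ℝ) ≠ 0 := ne_of_gt hd0
  have hdetpos : 0 < A.det := lt_of_le_of_lt (by positivity) hcon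
  -- eigenvalues all positive
  have hev0 : ∀ i, 0 ≤ hA.1.eigenvalues i := hA.eigenvalues_nonneg
  have hevpos : ∀ i, 0 < hA.1.eigenvalues i := by
    intro i
    rcases (hev0 i).lt_or_eq with h | h
    · exact h
    · exfalso
      have : A.det = 0 := by
        rw [hA.1.det_eq_prod_eigenvalues]
        rw [Finset.prod_eq_zero (Finset.mem_univ i) (by simp [← h])]
      linarith
  haveI : NeZero d := ⟨by omega⟩
  -- minimal eigenvalue
  obtain ⟨i₀, -, hi₀⟩ := Finset.exists_mem_eq_inf' (Finset.univ_nonempty (α := Fin d))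
    hA.1.eigenvalues
  set m : ℝ := Finset.univ.inf' Finset.univ_nonempty hA.1.eigenvalues with hmdef
  have hmle : ∀ i, m ≤ hA.1.eigenvalues i := fun i =>
    Finset.inf'_le _ (Finset.mem_univ i)
  have hmpos : 0 < m := by rw [hi₀]; exact hevpos i₀
  -- delta
  set δ : ℝ := A.det ^ ((1:ℝ)/d) with hδdef
  have hδpos : 0 < δ := Real.rpow_pos_of_pos hdetpos _
  have hδd : δ ^ d = A.det := by
    rw [hδdef, ← Real.rpow_natCast (A.det ^ ((1:ℝ)/d)) d, ← Real.rpow_mul hdetpos.le]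
    rw [one_div, inv_mul_cancel₀ hdne, Real.rpow_one]
  have hfxlt : fx < d * δ := by
    have h1 : (fx/d)^d < δ^d := by rw [hδd]; exact hcon
    have h2 : fx / d < δ := lt_of_pow_lt_pow_left₀ d hδpos.le h1
    calc fx = (fx / d) * d := by field_simp
    _ < δ * d := by exact mul_lt_mul_of_pos_right h2 hd0
    _ = d * δ := mul_comm _ _
  set t0 : ℝ := m / (2 * (fx + 1)) with ht0def
  have ht0pos : 0 < t0 := by positivity
  set ε : ℝ := min (m/2) (t0 * (d * δ - fx)) with hεdef
  have hεpos : 0 < ε := lt_min (by positivity) (mul_pos ht0pos (by linarith))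
  have hbd : ∀ y ∈ (fun B => bval d A B fx) '' S1set d, y ≤ -ε := by
    rintro y ⟨B, ⟨hBpsd, hBtr⟩, rfl⟩
    set t : ℝ := B.det ^ ((1:ℝ)/d) with htdef
    have ht : 0 ≤ t := Real.rpow_nonneg (psd_det_nonneg_s11 hBpsd) _
    have htr1 : m ≤ (B * A).trace := by
      have h1 : (0:ℝ) ≤ (B * (A - m • (1 : Matrix (Fin d) (Fin d) ℝ))).trace :=
        trace_mul_psd_nonneg (sub_smul_one_psd hA.1 hmle) hBpsd
      rw [Matrix.mul_sub, Matrix.trace_sub, Matrix.mul_smul, Matrix.mul_one,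
        Matrix.trace_smul, hBtr] at h1
      simp only [smul_eq_mul, mul_one] at h1
      linarith
    have htr2 : (d:ℝ) * (t * δ) ≤ (B * A).trace := by
      have h1 := amgm_psd (by omega : 0 < d) (sqrt_conj_psd hA hBpsd)
      rw [trace_sqrt_conj hA, det_sqrt_conj hA] at h1
      rw [Real.mul_rpow (psd_det_nonneg_s11 hBpsd) (psd_det_nonneg_s11 hA)] at h1
      exact h1
    show bval d A B fx ≤ -ε
    rw [bval, ← htdef]
    rcases le_or_gt t t0 with hcase | hcase
    · have h2 : fx * t ≤ fx * t0 := mul_le_mul_of_nonneg_left hcase hf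
      have h3 : fx * t0 ≤ m / 2 := by
        rw [ht0def, mul_div_assoc']
        rw [div_le_div_iff₀ (by linarith) (by norm_num)]
        nlinarith
      have h4 : (-ε : ℝ) ≥ -(m/2) := neg_le_neg (min_le_left _ _)
      linarith
    · have h2 : -(B * A).trace + fx * t ≤ -(t * (d * δ - fx)) := by nlinarith
      have h3 : t0 * (d * δ - fx) ≤ t * (d * δ - fx) :=
        mul_le_mul_of_nonneg_right hcase.le (by linarith)
      have h4 : (-ε : ℝ) ≥ -(t0 * (d * δ - fx)) := neg_le_neg (min_le_right _ _)
      linarith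
  -- nonempty
  have hne : ((fun B => bval d A B fx) '' S1set d).Nonempty := by
    refine ⟨bval d A ((d:ℝ)⁻¹ • 1) fx, ⟨(d:ℝ)⁻¹ • 1, ⟨?_, ?_⟩, rfl⟩⟩
    · rw [Matrix.smul_one_eq_diagonal]
      exact Matrix.posSemidef_diagonal_iff.mpr fun i => by positivity
    · rw [Matrix.trace_smul, Matrix.trace_one]
      simp only [smul_eq_mul, Fintype.card_fin]
      field_simp
  have hle : sSup ((fun B => bval d A B fx) '' S1set d) ≤ -ε := csSup_le hne hbd
  rw [bellman] at hb
  linarith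


/-- A convex viscosity supersolution of the Bellman equation is a viscosity supersolution
of the Monge–Ampère equation on the set of convex functions. -/
theorem stmt_11 (d : ℕ) (hd : 2 ≤ d) (Ω : Set (Fin d → ℝ)) (hΩo : IsOpen Ω)
    (hΩb : Bornology.IsBounded Ω)
    (f : (Fin d → ℝ) → ℝ) (hfc : ContinuousOn f Ω) (hf0 : ∀ x ∈ Ω, 0 ≤ f x)
    (u : (Fin d → ℝ) → ℝ) (hlsc : LowerSemicontinuousOn u Ω) (hucvx : ConvexOn ℝ Ω u)
    (hsup : ∀ φ : (Fin d → ℝ) → ℝ, ContDiffOn ℝ 2 φ Ω →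
      ∀ x ∈ Ω, IsLocalMinOn (fun y => u y - φ y) Ω x →
        0 ≤ bellman d (hessianM d φ x) (f x)) :
    ∀ φ : (Fin d → ℝ) → ℝ, ContDiffOn ℝ 2 φ Ω → ConvexOn ℝ Ω φ →
      ∀ x ∈ Ω, IsLocalMinOn (fun y => u y - φ y) Ω x →
        0 ≤ MAop d (hessianM d φ x) (f x) := by
  intro φ hφ hφcvx x hx hmin
  have hb := hsup φ hφ x hx hmin
  have hpsd := hessian_psd hΩo hφ hφcvx hx
  have hdet := key_det_le hd hpsd (hf0 x hx) hb
  rw [MAop]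
  linarith
end
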